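/- arXiv:2512.06349 — 2 statements merged into one kernel-verified Lean document; each statement's English description precedes it below -/
import Mathlib

section
/- Assume R₀ := BᵀB + σ²·B̄ᵀB̄ is positive definite. Let λ ∈ ℝ and let P be a symmetric positive definite n×n matrix. Then the following are equivalent: (i) for every x ∈ ℝⁿ, e^λ·(xᵀPx) = inf_{v∈ℝ^m} E_ω[((A + Ā·ω)x + (B + B̄·ω)v)ᵀ·P·((A + Ā·ω)x + (B + B̄·ω)v)], where ω is a real Gaussian random variable with mean 0 and variance σ²; (ii) Φ(P) = γ·P with γ = e^λ (a nonlinear matrix eigenvalue relation). Moreover, when these hold, for each x ∈ ℝⁿ the infimum in (i) is attained uniquely at v = −K(P)·x. -/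
open Matrix MeasureTheory ProbabilityTheory
open scoped ENNReal Classical

noncomputable section

namespace SCS

/-! ### Matrix-analytic definitions -/

/-- Rayleigh-quotient definition of the largest eigenvalue of a symmetric matrix. -/
def lamMax {n : ℕ} (M : Matrix (Fin n) (Fin n) ℝ) : ℝ :=
  ⨆ x : {x : Fin n → ℝ // x ⬝ᵥ x = 1}, x.1 ⬝ᵥ M.mulVec x.1

/-- Rayleigh-quotient definition of the smallest eigenvalue of a symmetric matrix. -/
def lamMin {n : ℕ} (M : Matrix (Fin n) (Fin n) ℝ) : ℝ :=
  ⨅ x : {x : Fin n → ℝ // x ⬝ᵥ x = 1}, x.1 ⬝ᵥ M.mulVec x.1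

/-- Spectral norm (the operator norm induced by the Euclidean norm). -/
def specNorm {p q : ℕ} (M : Matrix (Fin p) (Fin q) ℝ) : ℝ :=
  Real.sqrt (lamMax (Mᵀ * M))

variable {n m : ℕ}

/-- `R(P) = BᵀPB + σ²·B̄ᵀPB̄`. -/
def Rop (σ : ℝ) (B Bbar : Matrix (Fin n) (Fin m) ℝ) (P : Matrix (Fin n) (Fin n) ℝ) :
    Matrix (Fin m) (Fin m) ℝ :=
  Bᵀ * P * B + σ ^ 2 • (Bbarᵀ * P * Bbar)

/-- `S(P) = AᵀPB + σ²·ĀᵀPB̄`. -/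
def Sop (σ : ℝ) (A Abar : Matrix (Fin n) (Fin n) ℝ) (B Bbar : Matrix (Fin n) (Fin m) ℝ)
    (P : Matrix (Fin n) (Fin n) ℝ) : Matrix (Fin n) (Fin m) ℝ :=
  Aᵀ * P * B + σ ^ 2 • (Abarᵀ * P * Bbar)

/-- `Φ(P) = AᵀPA + σ²·ĀᵀPĀ − S(P)·R(P)⁻¹·S(P)ᵀ`. -/
def Phi (σ : ℝ) (A Abar : Matrix (Fin n) (Fin n) ℝ) (B Bbar : Matrix (Fin n) (Fin m) ℝ)
    (P : Matrix (Fin n) (Fin n) ℝ) : Matrix (Fin n) (Fin n) ℝ :=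
  Aᵀ * P * A + σ ^ 2 • (Abarᵀ * P * Abar)
    - Sop σ A Abar B Bbar P * (Rop σ B Bbar P)⁻¹ * (Sop σ A Abar B Bbar P)ᵀ

/-- `K(P) = R(P)⁻¹·S(P)ᵀ`. -/
def Kgain (σ : ℝ) (A Abar : Matrix (Fin n) (Fin n) ℝ) (B Bbar : Matrix (Fin n) (Fin m) ℝ)
    (P : Matrix (Fin n) (Fin n) ℝ) : Matrix (Fin m) (Fin n) ℝ :=
  (Rop σ B Bbar P)⁻¹ * (Sop σ A Abar B Bbar P)ᵀ

/-- `C_A = λ_max(AAᵀ + σ²·ĀĀᵀ)`. -/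
def CA (σ : ℝ) (A Abar : Matrix (Fin n) (Fin n) ℝ) : ℝ :=
  lamMax (A * Aᵀ + σ ^ 2 • (Abar * Abarᵀ))

/-- `δ_τ = (τ/n)/((1−τ)·C_A + τ)`. -/
def deltaTau (σ : ℝ) (A Abar : Matrix (Fin n) (Fin n) ℝ) (τ : ℝ) : ℝ :=
  (τ / (n : ℝ)) / ((1 - τ) * CA σ A Abar + τ)

/-- The regularized normalized operator
`Φ̂_τ(P) = ((1−τ)·Φ(P) + (τ/n)·I) / Tr((1−τ)·Φ(P) + (τ/n)·I)`. -/
def PhiHat (σ : ℝ) (A Abar : Matrix (Fin n) (Fin n) ℝ) (B Bbar : Matrix (Fin n) (Fin m) ℝ)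
    (τ : ℝ) (P : Matrix (Fin n) (Fin n) ℝ) : Matrix (Fin n) (Fin n) ℝ :=
  (Matrix.trace ((1 - τ) • Phi σ A Abar B Bbar P
      + (τ / (n : ℝ)) • (1 : Matrix (Fin n) (Fin n) ℝ)))⁻¹ •
    ((1 - τ) • Phi σ A Abar B Bbar P + (τ / (n : ℝ)) • (1 : Matrix (Fin n) (Fin n) ℝ))

/-- Inverse of the positive-semidefinite square root (junk value `0` off the PSD cone),
so `invSqrt P = P^{−1/2}` for positive definite `P`. -/
def invSqrt {n : ℕ} (P : Matrix (Fin n) (Fin n) ℝ) : Matrix (Fin n) (Fin n) ℝ :=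
  if h : P.PosSemidef then
    ((h.1.eigenvectorUnitary : Matrix (Fin n) (Fin n) ℝ) *
      diagonal (fun i => Real.sqrt (h.1.eigenvalues i)) *
      (star h.1.eigenvectorUnitary : Matrix (Fin n) (Fin n) ℝ))⁻¹ else 0

/-- `L(P) = λ_min(P^{−1/2}·Φ(P)·P^{−1/2})`. -/
def Lval (σ : ℝ) (A Abar : Matrix (Fin n) (Fin n) ℝ) (B Bbar : Matrix (Fin n) (Fin m) ℝ)
    (P : Matrix (Fin n) (Fin n) ℝ) : ℝ :=
  lamMin (invSqrt P * Phi σ A Abar B Bbar P * invSqrt P)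

/-- `U(P) = λ_max(P^{−1/2}·Φ(P)·P^{−1/2})`. -/
def Uval (σ : ℝ) (A Abar : Matrix (Fin n) (Fin n) ℝ) (B Bbar : Matrix (Fin n) (Fin m) ℝ)
    (P : Matrix (Fin n) (Fin n) ℝ) : ℝ :=
  lamMax (invSqrt P * Phi σ A Abar B Bbar P * invSqrt P)

/-- The trace-normalized slice `S_a = {X symmetric : X ⪰ a·I, Tr X = 1}`. -/
def Slice (a : ℝ) : Set (Matrix (Fin n) (Fin n) ℝ) :=
  {X | X.IsSymm ∧ (X - a • (1 : Matrix (Fin n) (Fin n) ℝ)).PosSemidef ∧ X.trace = 1}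

/-- `α_A = ‖A‖² + σ²·‖Ā‖²` (spectral norms). -/
def alphaA (σ : ℝ) (A Abar : Matrix (Fin n) (Fin n) ℝ) : ℝ :=
  specNorm A ^ 2 + σ ^ 2 * specNorm Abar ^ 2

/-- `α_S = ‖A‖·‖B‖ + σ²·‖Ā‖·‖B̄‖`. -/
def alphaS (σ : ℝ) (A Abar : Matrix (Fin n) (Fin n) ℝ) (B Bbar : Matrix (Fin n) (Fin m) ℝ) : ℝ :=
  specNorm A * specNorm B + σ ^ 2 * specNorm Abar * specNorm Bbar

/-- `α_R = ‖B‖² + σ²·‖B̄‖²`. -/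
def alphaR (σ : ℝ) (B Bbar : Matrix (Fin n) (Fin m) ℝ) : ℝ :=
  specNorm B ^ 2 + σ ^ 2 * specNorm Bbar ^ 2

/-- `c_R(a) = 1/(a·λ_min(R₀))`. -/
def cR (σ : ℝ) (B Bbar : Matrix (Fin n) (Fin m) ℝ) (a : ℝ) : ℝ :=
  1 / (a * lamMin (Bᵀ * B + σ ^ 2 • (Bbarᵀ * Bbar)))

/-- `L_Φ(a) = α_A + 2·α_S²·c_R(a) + α_S²·α_R·c_R(a)²`. -/
def LPhi (σ : ℝ) (A Abar : Matrix (Fin n) (Fin n) ℝ) (B Bbar : Matrix (Fin n) (Fin m) ℝ)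
    (a : ℝ) : ℝ :=
  alphaA σ A Abar + 2 * alphaS σ A Abar B Bbar ^ 2 * cR σ B Bbar a
    + alphaS σ A Abar B Bbar ^ 2 * alphaR σ B Bbar * cR σ B Bbar a ^ 2

/-- `C_Φ(a) = α_A + α_S²·c_R(a)`. -/
def CPhi (σ : ℝ) (A Abar : Matrix (Fin n) (Fin n) ℝ) (B Bbar : Matrix (Fin n) (Fin m) ℝ)
    (a : ℝ) : ℝ :=
  alphaA σ A Abar + alphaS σ A Abar B Bbar ^ 2 * cR σ B Bbar a

/-- The contraction modulus `Λ(τ)`. -/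
def LambdaTau (σ : ℝ) (A Abar : Matrix (Fin n) (Fin n) ℝ) (B Bbar : Matrix (Fin n) (Fin m) ℝ)
    (τ : ℝ) : ℝ :=
  (1 - τ) * LPhi σ A Abar B Bbar (deltaTau σ A Abar τ) / τ
    + (1 - τ) * ((1 - τ) * CPhi σ A Abar B Bbar (deltaTau σ A Abar τ) + τ / (n : ℝ))
        * (n : ℝ) * LPhi σ A Abar B Bbar (deltaTau σ A Abar τ) / τ ^ 2

/-- The directional derivative `DΦ(P)[H]`. -/
def DPhi (σ : ℝ) (A Abar : Matrix (Fin n) (Fin n) ℝ) (B Bbar : Matrix (Fin n) (Fin m) ℝ)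
    (P H : Matrix (Fin n) (Fin n) ℝ) : Matrix (Fin n) (Fin n) ℝ :=
  Aᵀ * H * A + σ ^ 2 • (Abarᵀ * H * Abar)
    - (Aᵀ * H * B + σ ^ 2 • (Abarᵀ * H * Bbar)) * (Rop σ B Bbar P)⁻¹ * (Sop σ A Abar B Bbar P)ᵀ
    - Sop σ A Abar B Bbar P * (Rop σ B Bbar P)⁻¹ * (Bᵀ * H * A + σ ^ 2 • (Bbarᵀ * H * Abar))
    + Sop σ A Abar B Bbar P * (Rop σ B Bbar P)⁻¹ * (Bᵀ * H * B + σ ^ 2 • (Bbarᵀ * H * Bbar))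
        * (Rop σ B Bbar P)⁻¹ * (Sop σ A Abar B Bbar P)ᵀ

/-- `s_τ(P) = Tr((1−τ)·Φ(P) + (τ/n)·I)`. -/
def sTau (σ : ℝ) (A Abar : Matrix (Fin n) (Fin n) ℝ) (B Bbar : Matrix (Fin n) (Fin m) ℝ)
    (τ : ℝ) (P : Matrix (Fin n) (Fin n) ℝ) : ℝ :=
  Matrix.trace ((1 - τ) • Phi σ A Abar B Bbar P + (τ / (n : ℝ)) • (1 : Matrix (Fin n) (Fin n) ℝ))

/-- The directional derivative
`DΦ̂_τ(P)[H] = ((1−τ)/s_τ(P))·(DΦ(P)[H] − Φ̂_τ(P)·Tr(DΦ(P)[H]))`. -/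
def DPhiHat (σ : ℝ) (A Abar : Matrix (Fin n) (Fin n) ℝ) (B Bbar : Matrix (Fin n) (Fin m) ℝ)
    (τ : ℝ) (P H : Matrix (Fin n) (Fin n) ℝ) : Matrix (Fin n) (Fin n) ℝ :=
  ((1 - τ) / sTau σ A Abar B Bbar τ P) •
    (DPhi σ A Abar B Bbar P H
      - Matrix.trace (DPhi σ A Abar B Bbar P H) • PhiHat σ A Abar B Bbar τ P)

/-- The local Lipschitz modulus `Lip(P,τ) = sup{‖DΦ̂_τ(P)[H]‖ : H symmetric, ‖H‖ = 1}`. -/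
def LipMod (σ : ℝ) (A Abar : Matrix (Fin n) (Fin n) ℝ) (B Bbar : Matrix (Fin n) (Fin m) ℝ)
    (τ : ℝ) (P : Matrix (Fin n) (Fin n) ℝ) : ℝ :=
  ⨆ H : {H : Matrix (Fin n) (Fin n) ℝ // H.IsSymm ∧ specNorm H = 1},
    specNorm (DPhiHat σ A Abar B Bbar τ P H.1)

/-! ### Probabilistic definitions -/

/-- The Gaussian measure on `ℝ` with mean `0` and variance `σ²`. -/
def gauss (σ : ℝ) : Measure ℝ := gaussianReal 0 ⟨σ ^ 2, sq_nonneg σ⟩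

/-- The Gaussian expectation `E_ω[((A+Āω)x + (B+B̄ω)v)ᵀ·P·((A+Āω)x + (B+B̄ω)v)]`. -/
def qform (σ : ℝ) (A Abar : Matrix (Fin n) (Fin n) ℝ) (B Bbar : Matrix (Fin n) (Fin m) ℝ)
    (P : Matrix (Fin n) (Fin n) ℝ) (x : Fin n → ℝ) (v : Fin m → ℝ) : ℝ :=
  ∫ s, (((A + s • Abar).mulVec x + (B + s • Bbar).mulVec v) ⬝ᵥ
      P.mulVec ((A + s • Abar).mulVec x + (B + s • Bbar).mulVec v)) ∂(gauss σ)

/-- The data of the stochastic control system: a probability space `(Ω, F, Pr)`,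
system matrices `A, Ā, B, B̄`, a noise level `σ > 0`, an i.i.d. sequence `w` of
Gaussian random variables with mean `0` and variance `σ²`, and a sub-σ-algebra `G`
independent of the noise. -/
structure Ctx (n m : ℕ) (Ω : Type) [mΩ : MeasurableSpace Ω] where
  Pr : Measure Ω
  isProb : IsProbabilityMeasure Pr
  σ : ℝ
  hσ : 0 < σ
  A : Matrix (Fin n) (Fin n) ℝ
  Abar : Matrix (Fin n) (Fin n) ℝ
  B : Matrix (Fin n) (Fin m) ℝ
  Bbar : Matrix (Fin n) (Fin m) ℝ
  w : ℕ → Ω → ℝ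
  hw_meas : ∀ k, Measurable (w k)
  hw_gauss : ∀ k, Pr.map (w k) = gauss σ
  hw_iid : iIndepFun w Pr
  G : MeasurableSpace Ω
  hG : G ≤ mΩ
  hw_indep_G : Indep (⨆ k, MeasurableSpace.comap (w k) inferInstance) G Pr

variable {Ω : Type} [MeasurableSpace Ω]

/-- The filtration `F_k = G ∨ σ(ω₀, …, ω_{k−1})`. -/
def Ctx.Fk (C : Ctx n m Ω) (k : ℕ) : MeasurableSpace Ω :=
  C.G ⊔ ⨆ i ∈ Finset.range k, MeasurableSpace.comap (C.w i) inferInstance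

/-- Admissible policies: `u_k` is `F_k`-measurable and square-integrable. -/
def Ctx.Admissible (C : Ctx n m Ω) (u : ℕ → Ω → Fin m → ℝ) : Prop :=
  ∀ k, Measurable[C.Fk k] (u k) ∧ MemLp (u k) 2 C.Pr

/-- Admissible initial states: `G`-measurable and square-integrable. -/
def Ctx.InitOK (C : Ctx n m Ω) (x : Ω → Fin n → ℝ) : Prop :=
  Measurable[C.G] x ∧ MemLp x 2 C.Pr

/-- The state trajectory `x_{k+1} = (A + Ā·ω_k)x_k + (B + B̄·ω_k)u_k`. -/
def Ctx.traj (C : Ctx n m Ω) (x0 : Ω → Fin n → ℝ) (u : ℕ → Ω → Fin m → ℝ) :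
    ℕ → Ω → Fin n → ℝ
  | 0 => x0
  | k + 1 => fun s =>
      (C.A + C.w k s • C.Abar).mulVec (C.traj x0 u k s)
      + (C.B + C.w k s • C.Bbar).mulVec (u k s)

/-- `E[xᵀx]`. -/
def msSq {n : ℕ} (Pr : Measure Ω) (x : Ω → Fin n → ℝ) : ℝ := ∫ s, x s ⬝ᵥ x s ∂Pr

/-- The mean-square norm `‖x‖_ms = (E[xᵀx])^{1/2}`. -/
def msNorm {n : ℕ} (Pr : Measure Ω) (x : Ω → Fin n → ℝ) : ℝ := Real.sqrt (msSq Pr x)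

/-- The mean-square stabilizing rate `ρ(u)` of a policy. -/
def Ctx.rate (C : Ctx n m Ω) (u : ℕ → Ω → Fin m → ℝ) : ℝ :=
  sInf {ρ : ℝ | 0 ≤ ρ ∧ ∃ κ : ℝ, 0 ≤ κ ∧ ∀ x0, C.InitOK x0 → ∀ k : ℕ,
    msSq C.Pr (C.traj x0 u k) ≤ κ * ρ ^ (2 * k) * msSq C.Pr x0}

/-- The optimal stabilizing rate `ρ* = inf_{u ∈ U} ρ(u)`. -/
def Ctx.rhoStar (C : Ctx n m Ω) : ℝ :=
  sInf {r : ℝ | ∃ u, C.Admissible u ∧ r = C.rate u}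

/-- `η(x) = inf_{u ∈ U} sup_{k ∈ ℕ} ‖x_k‖_ms/(ρ*)^k` (with values in `[0,∞]`). -/
def Ctx.eta (C : Ctx n m Ω) (x : Ω → Fin n → ℝ) : ℝ≥0∞ :=
  ⨅ (u : ℕ → Ω → Fin m → ℝ) (_ : C.Admissible u),
    ⨆ k : ℕ, ENNReal.ofReal (msNorm C.Pr (C.traj x u k) / C.rhoStar ^ k)

/-- The per-trajectory mean-square stabilizing rate `ρ(u; x₀)`. -/
def Ctx.rateAt (C : Ctx n m Ω) (x0 : Ω → Fin n → ℝ) (u : ℕ → Ω → Fin m → ℝ) : ℝ :=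
  sInf {ρ : ℝ | 0 ≤ ρ ∧ ∃ κ : ℝ, 0 ≤ κ ∧ ∀ k : ℕ,
    msSq C.Pr (C.traj x0 u k) ≤ κ * ρ ^ (2 * k) * msSq C.Pr x0}

/-- The cost `J(x₀,u) = limsup_k (1/k)·log(E[x_kᵀx_k]/E[x₀ᵀx₀])`. -/
def Ctx.J (C : Ctx n m Ω) (x0 : Ω → Fin n → ℝ) (u : ℕ → Ω → Fin m → ℝ) : ℝ :=
  Filter.limsup
    (fun k : ℕ => (1 / (k : ℝ)) * Real.log (msSq C.Pr (C.traj x0 u k) / msSq C.Pr x0))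
    Filter.atTop

/-- Feedback policies: `u_k = μ_k(x_k)` for Borel-measurable `μ_k`. -/
def Ctx.IsFeedback (C : Ctx n m Ω) (x0 : Ω → Fin n → ℝ) (u : ℕ → Ω → Fin m → ℝ) : Prop :=
  ∃ μ : ℕ → (Fin n → ℝ) → Fin m → ℝ, (∀ k, Measurable (μ k)) ∧
    ∀ k s, u k s = μ k (C.traj x0 u k s)

/-- The closed-loop trajectory under a stationary feedback law `μ`. -/
def Ctx.fbTraj (C : Ctx n m Ω) (x0 : Ω → Fin n → ℝ) (μ : (Fin n → ℝ) → Fin m → ℝ) :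
    ℕ → Ω → Fin n → ℝ
  | 0 => x0
  | k + 1 => fun s =>
      (C.A + C.w k s • C.Abar).mulVec (C.fbTraj x0 μ k s)
      + (C.B + C.w k s • C.Bbar).mulVec (μ (C.fbTraj x0 μ k s))

/-- The stationary policy `u* given by `u*_k = μ(x*_k)` along its own closed-loop
trajectory, for a stationary feedback law `μ`. -/
def Ctx.fbPolicy (C : Ctx n m Ω) (x0 : Ω → Fin n → ℝ) (μ : (Fin n → ℝ) → Fin m → ℝ) :
    ℕ → Ω → Fin m → ℝ :=
  fun k s => μ (C.fbTraj x0 μ k s)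

/-- The linear feedback policy `u*_k = −K·x*_k` along its own trajectory. -/
def Ctx.linFbPolicy (C : Ctx n m Ω) (x0 : Ω → Fin n → ℝ) (K : Matrix (Fin m) (Fin n) ℝ) :
    ℕ → Ω → Fin m → ℝ :=
  C.fbPolicy x0 (fun x => -(K.mulVec x))

/-- `ξ_♯(x) = inf_{v ∈ ℝ^m} ‖(A + Ā·ω)x + (B + B̄·ω)v‖_ms`, realized with `ω = ω₀`. -/
def Ctx.xiSharp (C : Ctx n m Ω) (x : Ω → Fin n → ℝ) : ℝ :=
  ⨅ v : Fin m → ℝ, msNorm C.Pr (fun s =>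
    (C.A + C.w 0 s • C.Abar).mulVec (x s) + (C.B + C.w 0 s • C.Bbar).mulVec v)

/-- Extended-real logarithm: `log t` for `t > 0` and `−∞` for `t ≤ 0`. -/
def elog (t : ℝ) : EReal := if t ≤ 0 then ⊥ else ((Real.log t : ℝ) : EReal)

/-- The cost `J(x₀,u)` interpreted with values in `[−∞,∞]`. -/
def Ctx.Je (C : Ctx n m Ω) (x0 : Ω → Fin n → ℝ) (u : ℕ → Ω → Fin m → ℝ) : EReal :=
  Filter.limsup
    (fun k : ℕ => ((1 / (k : ℝ) : ℝ) : EReal) * elog (msSq C.Pr (C.traj x0 u k) / msSq C.Pr x0))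
    Filter.atTop


/-! ### auxiliary lemmas -/

section GaussAux
open Real
open scoped NNReal
variable {σ : ℝ}

instance (τ : ℝ) : IsProbabilityMeasure (gauss τ) := by
  have h : ∀ v : ℝ≥0, IsProbabilityMeasure (gaussianReal 0 v) := fun v => inferInstance
  exact h _

lemma var_ne_zero (hσ : 0 < σ) : (⟨σ ^ 2, sq_nonneg σ⟩ : ℝ≥0) ≠ 0 := by
  intro h
  have : σ ^ 2 = 0 := congrArg NNReal.toReal h
  exact (pow_pos hσ 2).ne' this

lemma gauss_eq (hσ : 0 < σ) :
    gauss σ = volume.withDensity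
      (fun s => ((gaussianPDFReal 0 ⟨σ ^ 2, sq_nonneg σ⟩ s).toNNReal : ℝ≥0∞)) := by
  rw [gauss, gaussianReal_of_var_ne_zero _ (var_ne_zero hσ)]
  rfl

lemma integral_gauss (hσ : 0 < σ) (g : ℝ → ℝ) :
    ∫ s, g s ∂(gauss σ) = ∫ s, gaussianPDFReal 0 ⟨σ ^ 2, sq_nonneg σ⟩ s * g s := by
  have key : ∀ v : ℝ≥0, v ≠ 0 →
      ∫ s, g s ∂(gaussianReal 0 v) = ∫ s, gaussianPDFReal 0 v s * g s := by
    intro v hv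
    rw [gaussianReal_of_var_ne_zero _ hv]
    change ∫ s, g s ∂(volume.withDensity
      (fun s => ((gaussianPDFReal 0 v s).toNNReal : ℝ≥0∞))) = _
    rw [integral_withDensity_eq_integral_smul
      ((measurable_gaussianPDFReal _ _).real_toNNReal) g]
    congr 1
    ext s
    rw [NNReal.smul_def, smul_eq_mul, Real.coe_toNNReal _ (gaussianPDFReal_nonneg _ _ _)]
  exact key _ (var_ne_zero hσ)

lemma integrable_gauss_iff (hσ : 0 < σ) (g : ℝ → ℝ) :
    Integrable g (gauss σ) ↔
      Integrable (fun s => gaussianPDFReal 0 ⟨σ ^ 2, sq_nonneg σ⟩ s * g s) volume := by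
  have key : ∀ v : ℝ≥0, v ≠ 0 → (Integrable g (gaussianReal 0 v) ↔
      Integrable (fun s => gaussianPDFReal 0 v s * g s) volume) := by
    intro v hv
    rw [gaussianReal_of_var_ne_zero _ hv]
    change Integrable g (volume.withDensity
      (fun s => ((gaussianPDFReal 0 v s).toNNReal : ℝ≥0∞))) ↔ _
    rw [integrable_withDensity_iff_integrable_smul
      ((measurable_gaussianPDFReal _ _).real_toNNReal)]
    constructor <;> intro h <;> refine h.congr (Filter.Eventually.of_forall fun s => ?_) <;>
      · dsimp only
        rw [NNReal.smul_def, smul_eq_mul, Real.coe_toNNReal _ (gaussianPDFReal_nonneg _ _ _)]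
  exact key _ (var_ne_zero hσ)

lemma pdf_eq (hσ : 0 < σ) (s : ℝ) :
    gaussianPDFReal 0 ⟨σ ^ 2, sq_nonneg σ⟩ s
      = (Real.sqrt (2 * π * σ ^ 2))⁻¹ * Real.exp (-(2 * σ ^ 2)⁻¹ * s ^ 2) := by
  have key : ∀ v : ℝ≥0, (v : ℝ) = σ ^ 2 → gaussianPDFReal 0 v s
      = (Real.sqrt (2 * π * σ ^ 2))⁻¹ * Real.exp (-(2 * σ ^ 2)⁻¹ * s ^ 2) := by
    intro v hv
    simp only [gaussianPDFReal, sub_zero]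
    rw [hv]
    congr 1
    ring
  exact key _ rfl

lemma integrable_sq_exp {b : ℝ} (hb : 0 < b) :
    Integrable (fun x : ℝ => x ^ 2 * Real.exp (-b * x ^ 2)) := by
  refine Integrable.mono' ((integrable_exp_neg_mul_sq (half_pos hb)).const_mul (2 / b))
    (Continuous.aestronglyMeasurable (by continuity)) (Filter.Eventually.of_forall fun x => ?_)
  rw [Real.norm_eq_abs, abs_of_nonneg (by positivity)]
  have h1 : (b / 2) * x ^ 2 ≤ Real.exp ((b / 2) * x ^ 2) :=
    le_trans (le_add_of_nonneg_right zero_le_one) (Real.add_one_le_exp _)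
  calc x ^ 2 * Real.exp (-b * x ^ 2)
      = (2 / b) * ((b / 2) * x ^ 2) * Real.exp (-b * x ^ 2) := by
        field_simp
    _ ≤ (2 / b) * Real.exp ((b / 2) * x ^ 2) * Real.exp (-b * x ^ 2) := by
        have h2 : (0:ℝ) ≤ 2 / b := by positivity
        exact mul_le_mul_of_nonneg_right
          (mul_le_mul_of_nonneg_left h1 h2) (Real.exp_nonneg _)
    _ = 2 / b * Real.exp (-(b / 2) * x ^ 2) := by
        rw [mul_assoc, ← Real.exp_add]
        congr 2
        ring

lemma integral_odd_exp {b : ℝ} (hb : 0 < b) :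
    ∫ x : ℝ, x * Real.exp (-b * x ^ 2) = 0 := by
  set f : ℝ → ℝ := fun x => x * Real.exp (-b * x ^ 2) with hf
  have hI : Integrable f := integrable_mul_exp_neg_mul_sq hb
  have hIic : ∫ x in Set.Iic (0:ℝ), f x = - ∫ x in Set.Ioi (0:ℝ), f x := by
    have h := integral_comp_neg_Iic (0:ℝ) f
    rw [neg_zero] at h
    rw [← h]
    rw [← MeasureTheory.integral_neg]
    refine setIntegral_congr_fun measurableSet_Iic fun x _ => ?_
    simp only [hf]
    rw [neg_sq]
    ring
  rw [← intervalIntegral.integral_Iic_add_Ioi (b := (0:ℝ)) hI.integrableOn hI.integrableOn,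
    hIic, neg_add_cancel]

lemma integral_sq_exp {b : ℝ} (hb : 0 < b) :
    ∫ x : ℝ, x ^ 2 * Real.exp (-b * x ^ 2) = b ^ (-(3:ℝ)/2) * (Real.sqrt π / 2) := by
  set f : ℝ → ℝ := fun x => x ^ 2 * Real.exp (-b * x ^ 2) with hf
  have hI : Integrable f := integrable_sq_exp hb
  have hIoi : ∫ x in Set.Ioi (0:ℝ), f x = b ^ (-(3:ℝ)/2) * (Real.sqrt π / 4) := by
    have h := integral_rpow_mul_exp_neg_mul_rpow (p := 2) (q := 2) two_pos
      (by norm_num) hb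
    have hG : Real.Gamma ((2 + 1) / 2) = Real.sqrt π / 2 := by
      rw [show ((2:ℝ) + 1) / 2 = 1/2 + 1 by norm_num,
        Real.Gamma_add_one (by norm_num), Real.Gamma_one_half_eq]
      ring
    rw [hG] at h
    rw [show (b:ℝ) ^ (-(3:ℝ)/2) * (Real.sqrt π / 4)
        = b ^ (-((2:ℝ) + 1) / 2) * (1 / 2) * (Real.sqrt π / 2) by
          rw [show -((2:ℝ) + 1) / 2 = -(3:ℝ)/2 by norm_num]; ring, ← h]
    refine setIntegral_congr_fun measurableSet_Ioi fun x _ => ?_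
    simp only [hf]
    rw [show ((2:ℝ)) = ((2:ℕ):ℝ) by norm_num]
    simp [Real.rpow_natCast]
  have hIic : ∫ x in Set.Iic (0:ℝ), f x = ∫ x in Set.Ioi (0:ℝ), f x := by
    have h := integral_comp_neg_Iic (0:ℝ) f
    rw [neg_zero] at h
    rw [← h]
    refine setIntegral_congr_fun measurableSet_Iic fun x _ => ?_
    simp only [hf, neg_sq]
  rw [← intervalIntegral.integral_Iic_add_Ioi (b := (0:ℝ)) hI.integrableOn hI.integrableOn,
    hIic, hIoi]
  ring

lemma integrable_id_gauss (hσ : 0 < σ) : Integrable (fun s : ℝ => s) (gauss σ) := by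
  rw [integrable_gauss_iff hσ]
  have hb : (0:ℝ) < (2 * σ ^ 2)⁻¹ := by positivity
  have := ((integrable_mul_exp_neg_mul_sq hb).const_mul (Real.sqrt (2 * π * σ ^ 2))⁻¹)
  refine this.congr (Filter.Eventually.of_forall fun s => ?_)
  dsimp only
  rw [pdf_eq hσ]
  ring

lemma integrable_sq_gauss (hσ : 0 < σ) : Integrable (fun s : ℝ => s ^ 2) (gauss σ) := by
  rw [integrable_gauss_iff hσ]
  have hb : (0:ℝ) < (2 * σ ^ 2)⁻¹ := by positivity
  have := ((integrable_sq_exp hb).const_mul (Real.sqrt (2 * π * σ ^ 2))⁻¹)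
  refine this.congr (Filter.Eventually.of_forall fun s => ?_)
  dsimp only
  rw [pdf_eq hσ]
  ring

lemma integral_id_gauss (hσ : 0 < σ) : ∫ s, s ∂(gauss σ) = 0 := by
  rw [integral_gauss hσ]
  have hb : (0:ℝ) < (2 * σ ^ 2)⁻¹ := by positivity
  calc ∫ s, gaussianPDFReal 0 ⟨σ ^ 2, sq_nonneg σ⟩ s * s
      = ∫ s, (Real.sqrt (2 * π * σ ^ 2))⁻¹ * (s * Real.exp (-(2 * σ ^ 2)⁻¹ * s ^ 2)) := by
        congr 1; ext s; rw [pdf_eq hσ]; ring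
    _ = (Real.sqrt (2 * π * σ ^ 2))⁻¹ * ∫ s, s * Real.exp (-(2 * σ ^ 2)⁻¹ * s ^ 2) :=
        MeasureTheory.integral_const_mul _ _
    _ = 0 := by rw [integral_odd_exp hb, mul_zero]

lemma integral_sq_gauss (hσ : 0 < σ) : ∫ s, s ^ 2 ∂(gauss σ) = σ ^ 2 := by
  rw [integral_gauss hσ]
  have hb : (0:ℝ) < (2 * σ ^ 2)⁻¹ := by positivity
  have h2 : (0:ℝ) < 2 * σ ^ 2 := by positivity
  calc ∫ s, gaussianPDFReal 0 ⟨σ ^ 2, sq_nonneg σ⟩ s * s ^ 2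
      = ∫ s, (Real.sqrt (2 * π * σ ^ 2))⁻¹ * (s ^ 2 * Real.exp (-(2 * σ ^ 2)⁻¹ * s ^ 2)) := by
        congr 1; ext s; rw [pdf_eq hσ]; ring
    _ = (Real.sqrt (2 * π * σ ^ 2))⁻¹ * ∫ s, s ^ 2 * Real.exp (-(2 * σ ^ 2)⁻¹ * s ^ 2) :=
        MeasureTheory.integral_const_mul _ _
    _ = (Real.sqrt (2 * π * σ ^ 2))⁻¹ * (((2 * σ ^ 2)⁻¹ : ℝ) ^ (-(3:ℝ)/2) * (Real.sqrt π / 2)) := by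
        rw [integral_sq_exp hb]
    _ = σ ^ 2 := by
        have hrp : ((2 * σ ^ 2)⁻¹ : ℝ) ^ (-(3:ℝ)/2) = (2 * σ ^ 2) * Real.sqrt (2 * σ ^ 2) := by
          rw [Real.inv_rpow h2.le, ← Real.rpow_neg h2.le, neg_div, neg_neg,
            show (3:ℝ)/2 = 1 + 1/2 by norm_num, Real.rpow_add h2, Real.rpow_one,
            ← Real.sqrt_eq_rpow]
        rw [hrp, show 2 * π * σ ^ 2 = (2 * σ ^ 2) * π by ring,
          Real.sqrt_mul h2.le]
        have hs2 : (0:ℝ) < Real.sqrt (2 * σ ^ 2) := Real.sqrt_pos.mpr h2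
        have hsp : (0:ℝ) < Real.sqrt π := Real.sqrt_pos.mpr Real.pi_pos
        field_simp

end GaussAux

section MatAux

lemma dp3 {p q r : ℕ} (M : Matrix (Fin p) (Fin q) ℝ) (P : Matrix (Fin p) (Fin p) ℝ)
    (N : Matrix (Fin p) (Fin r) ℝ) (u : Fin q → ℝ) (w : Fin r → ℝ) :
    (M.mulVec u) ⬝ᵥ P.mulVec (N.mulVec w) = u ⬝ᵥ (Mᵀ * P * N).mulVec w := by
  have h1 : (Mᵀ * P * N).mulVec w = Mᵀ.mulVec (P.mulVec (N.mulVec w)) := by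
    rw [← Matrix.mulVec_mulVec, ← Matrix.mulVec_mulVec]
  conv_rhs => rw [h1, Matrix.dotProduct_mulVec, Matrix.vecMul_transpose]

lemma dp_comm {p q : ℕ} (M : Matrix (Fin p) (Fin q) ℝ) (u : Fin p → ℝ) (w : Fin q → ℝ) :
    u ⬝ᵥ M.mulVec w = w ⬝ᵥ Mᵀ.mulVec u := by
  rw [Matrix.dotProduct_mulVec, Matrix.mulVec_transpose, dotProduct_comm]

lemma sym_ext {k : ℕ} {M : Matrix (Fin k) (Fin k) ℝ} (hM : Mᵀ = M)
    (h : ∀ x, x ⬝ᵥ M.mulVec x = 0) : M = 0 := by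
  ext i j
  have e : ∀ a b : Fin k, (Pi.single a 1 : Fin k → ℝ) ⬝ᵥ M.mulVec (Pi.single b 1) = M a b := by
    intro a b
    simp [Matrix.mulVec_single, single_dotProduct]
  have hsym : M j i = M i j := congrFun (congrFun hM i) j
  have h1 := h (Pi.single i 1)
  have h2 := h (Pi.single j 1)
  have h3 := h (Pi.single i 1 + Pi.single j 1)
  rw [Matrix.mulVec_add, dotProduct_add, add_dotProduct, add_dotProduct, e, e, e, e] at h3
  rw [e] at h1
  rw [e] at h2
  simp only [Matrix.zero_apply]
  linarith

end MatAux


/-- For `P ≻ 0`, the Bellman-type equation is equivalent to the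
nonlinear matrix eigenvalue relation `Φ(P) = e^λ·P`; moreover when these hold,
for each `x` the infimum is attained uniquely at `v = −K(P)·x`. -/
theorem bellman_iff_eigen {n m : ℕ} (hn : 0 < n) (hm : 0 < m)
    (σ : ℝ) (hσ : 0 < σ)
    (A Abar : Matrix (Fin n) (Fin n) ℝ) (B Bbar : Matrix (Fin n) (Fin m) ℝ)
    (hR0 : (Bᵀ * B + σ ^ 2 • (Bbarᵀ * Bbar)).PosDef)
    (lam : ℝ) (P : Matrix (Fin n) (Fin n) ℝ) (hP : P.PosDef) :
    ((∀ x : Fin n → ℝ,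
        Real.exp lam * (x ⬝ᵥ P.mulVec x) = ⨅ v : Fin m → ℝ, qform σ A Abar B Bbar P x v)
      ↔ Phi σ A Abar B Bbar P = Real.exp lam • P) ∧
    ((∀ x : Fin n → ℝ,
        Real.exp lam * (x ⬝ᵥ P.mulVec x) = ⨅ v : Fin m → ℝ, qform σ A Abar B Bbar P x v) →
      ∀ x : Fin n → ℝ,
        IsLeast (Set.range (qform σ A Abar B Bbar P x))
          (qform σ A Abar B Bbar P x (-(Kgain σ A Abar B Bbar P).mulVec x)) ∧
        ∀ v : Fin m → ℝ,
          qform σ A Abar B Bbar P x v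
              = qform σ A Abar B Bbar P x (-(Kgain σ A Abar B Bbar P).mulVec x) →
            v = -(Kgain σ A Abar B Bbar P).mulVec x) := by
  classical
  set Qm : Matrix (Fin n) (Fin n) ℝ := Aᵀ * P * A + σ ^ 2 • (Abarᵀ * P * Abar) with hQm
  set Rm := Rop σ B Bbar P with hRm
  set Sm := Sop σ A Abar B Bbar P with hSm
  set Km := Kgain σ A Abar B Bbar P with hKm
  set Φm := Phi σ A Abar B Bbar P with hΦm
  have hPsym : Pᵀ = P := by
    rw [← Matrix.conjTranspose_eq_transpose_of_trivial]; exact hP.1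
  have hPpos : ∀ z : Fin n → ℝ, z ≠ 0 → 0 < z ⬝ᵥ P.mulVec z := fun z hz => by
    simpa using hP.dotProduct_mulVec_pos hz
  have hPnn : ∀ z : Fin n → ℝ, 0 ≤ z ⬝ᵥ P.mulVec z := fun z => by
    simpa using hP.posSemidef.dotProduct_mulVec_nonneg z
  have hRqf : ∀ w : Fin m → ℝ, w ⬝ᵥ Rm.mulVec w
      = (B.mulVec w) ⬝ᵥ P.mulVec (B.mulVec w)
        + σ ^ 2 * ((Bbar.mulVec w) ⬝ᵥ P.mulVec (Bbar.mulVec w)) := by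
    intro w
    rw [hRm, Rop, Matrix.add_mulVec, dotProduct_add, Matrix.smul_mulVec,
      dotProduct_smul, smul_eq_mul, ← dp3, ← dp3]
  have hRmpd : Rm.PosDef := by
    refine Matrix.PosDef.of_dotProduct_mulVec_pos ?_ ?_
    · show Rmᴴ = Rm
      rw [Matrix.conjTranspose_eq_transpose_of_trivial, hRm, Rop]
      simp [Matrix.transpose_add, Matrix.transpose_smul, Matrix.transpose_mul,
        Matrix.transpose_transpose, hPsym, Matrix.mul_assoc]
    · intro w hw
      show 0 < star w ⬝ᵥ Rm.mulVec w
      simp only [star_trivial]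
      rw [hRqf w]
      by_cases hB : B.mulVec w = 0
      · by_cases hBb : Bbar.mulVec w = 0
        · exfalso
          have h0 : (Bᵀ * B + σ ^ 2 • (Bbarᵀ * Bbar)).mulVec w = 0 := by
            rw [Matrix.add_mulVec, ← Matrix.mulVec_mulVec, hB, Matrix.smul_mulVec,
              ← Matrix.mulVec_mulVec, hBb]
            simp
          have hpos := hR0.dotProduct_mulVec_pos hw
          rw [h0] at hpos
          simp at hpos
        · have h1 : 0 ≤ (B.mulVec w) ⬝ᵥ P.mulVec (B.mulVec w) := hPnn _
          have h2 : 0 < (Bbar.mulVec w) ⬝ᵥ P.mulVec (Bbar.mulVec w) := hPpos _ hBb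
          have h3 : (0:ℝ) < σ ^ 2 := pow_pos hσ 2
          nlinarith
      · have h1 : 0 < (B.mulVec w) ⬝ᵥ P.mulVec (B.mulVec w) := hPpos _ hB
        have h2 : 0 ≤ (Bbar.mulVec w) ⬝ᵥ P.mulVec (Bbar.mulVec w) := hPnn _
        nlinarith [sq_nonneg σ]
  have hdet : IsUnit Rm.det := hRmpd.det_pos.ne'.isUnit
  have hR1 : Rm * Rm⁻¹ = 1 := Matrix.mul_nonsing_inv _ hdet
  have hRsym : Rmᵀ = Rm := by
    rw [← Matrix.conjTranspose_eq_transpose_of_trivial]; exact hRmpd.1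
  have hRinvsym : (Rm⁻¹)ᵀ = Rm⁻¹ := by rw [Matrix.transpose_nonsing_inv, hRsym]
  -- expansion of the quadratic cost
  have hqf : ∀ (x : Fin n → ℝ) (v : Fin m → ℝ), qform σ A Abar B Bbar P x v
      = (A.mulVec x + B.mulVec v) ⬝ᵥ P.mulVec (A.mulVec x + B.mulVec v)
        + σ ^ 2 * ((Abar.mulVec x + Bbar.mulVec v) ⬝ᵥ
            P.mulVec (Abar.mulVec x + Bbar.mulVec v)) := by
    intro x v
    set a : Fin n → ℝ := A.mulVec x + B.mulVec v with ha
    set bb : Fin n → ℝ := Abar.mulVec x + Bbar.mulVec v with hbb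
    have hvec : ∀ s : ℝ, (A + s • Abar).mulVec x + (B + s • Bbar).mulVec v = a + s • bb := by
      intro s
      rw [ha, hbb, Matrix.add_mulVec, Matrix.add_mulVec, Matrix.smul_mulVec,
        Matrix.smul_mulVec, smul_add]
      abel
    have hfun : ∀ s : ℝ, ((A + s • Abar).mulVec x + (B + s • Bbar).mulVec v) ⬝ᵥ
        P.mulVec ((A + s • Abar).mulVec x + (B + s • Bbar).mulVec v)
        = a ⬝ᵥ P.mulVec a
          + ((a ⬝ᵥ P.mulVec bb + bb ⬝ᵥ P.mulVec a) * s + (bb ⬝ᵥ P.mulVec bb) * s ^ 2) := by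
      intro s
      rw [hvec s]
      simp only [Matrix.mulVec_add, Matrix.mulVec_smul, dotProduct_add, add_dotProduct,
        dotProduct_smul, smul_dotProduct, smul_eq_mul]
      ring
    have hc1 : Integrable (fun _ : ℝ => a ⬝ᵥ P.mulVec a) (gauss σ) := integrable_const _
    have hc2 : Integrable (fun s : ℝ => (a ⬝ᵥ P.mulVec bb + bb ⬝ᵥ P.mulVec a) * s) (gauss σ) :=
      (integrable_id_gauss hσ).const_mul _
    have hc3 : Integrable (fun s : ℝ => (bb ⬝ᵥ P.mulVec bb) * s ^ 2) (gauss σ) :=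
      (integrable_sq_gauss hσ).const_mul _
    have hc23 : Integrable (fun s : ℝ => (a ⬝ᵥ P.mulVec bb + bb ⬝ᵥ P.mulVec a) * s
        + (bb ⬝ᵥ P.mulVec bb) * s ^ 2) (gauss σ) := hc2.add hc3
    rw [qform]
    calc ∫ s, (((A + s • Abar).mulVec x + (B + s • Bbar).mulVec v) ⬝ᵥ
        P.mulVec ((A + s • Abar).mulVec x + (B + s • Bbar).mulVec v)) ∂(gauss σ)
        = ∫ s, (a ⬝ᵥ P.mulVec a
            + ((a ⬝ᵥ P.mulVec bb + bb ⬝ᵥ P.mulVec a) * s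
              + (bb ⬝ᵥ P.mulVec bb) * s ^ 2)) ∂(gauss σ) := by
          congr 1; ext s; rw [hfun s]
      _ = a ⬝ᵥ P.mulVec a + σ ^ 2 * (bb ⬝ᵥ P.mulVec bb) := by
          rw [integral_add hc1 hc23, integral_add hc2 hc3,
            MeasureTheory.integral_const_mul, MeasureTheory.integral_const_mul,
            integral_id_gauss hσ, integral_sq_gauss hσ, integral_const]
          simp [mul_comm]
  have hq : ∀ (x : Fin n → ℝ) (v : Fin m → ℝ), qform σ A Abar B Bbar P x v
      = x ⬝ᵥ Qm.mulVec x + 2 * (x ⬝ᵥ Sm.mulVec v) + v ⬝ᵥ Rm.mulVec v := by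
    intro x v
    rw [hqf x v]
    have hcross : ∀ (M N : Matrix (Fin n) (Fin n) ℝ) (Bc : Matrix (Fin n) (Fin m) ℝ),
        True := fun _ _ _ => trivial
    have e1 : (A.mulVec x + B.mulVec v) ⬝ᵥ P.mulVec (A.mulVec x + B.mulVec v)
        = x ⬝ᵥ (Aᵀ * P * A).mulVec x + 2 * (x ⬝ᵥ (Aᵀ * P * B).mulVec v)
          + v ⬝ᵥ (Bᵀ * P * B).mulVec v := by
      rw [Matrix.mulVec_add, dotProduct_add, add_dotProduct, add_dotProduct,
        dp3, dp3, dp3, dp3]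
      have hc : v ⬝ᵥ (Bᵀ * P * A).mulVec x = x ⬝ᵥ (Aᵀ * P * B).mulVec v := by
        rw [dp_comm]
        congr 1
        simp [Matrix.transpose_mul, Matrix.transpose_transpose, hPsym, Matrix.mul_assoc]
      rw [hc]; ring
    have e2 : (Abar.mulVec x + Bbar.mulVec v) ⬝ᵥ P.mulVec (Abar.mulVec x + Bbar.mulVec v)
        = x ⬝ᵥ (Abarᵀ * P * Abar).mulVec x + 2 * (x ⬝ᵥ (Abarᵀ * P * Bbar).mulVec v)
          + v ⬝ᵥ (Bbarᵀ * P * Bbar).mulVec v := by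
      rw [Matrix.mulVec_add, dotProduct_add, add_dotProduct, add_dotProduct,
        dp3, dp3, dp3, dp3]
      have hc : v ⬝ᵥ (Bbarᵀ * P * Abar).mulVec x = x ⬝ᵥ (Abarᵀ * P * Bbar).mulVec v := by
        rw [dp_comm]
        congr 1
        simp [Matrix.transpose_mul, Matrix.transpose_transpose, hPsym, Matrix.mul_assoc]
      rw [hc]; ring
    have eQ : x ⬝ᵥ Qm.mulVec x
        = x ⬝ᵥ (Aᵀ * P * A).mulVec x + σ ^ 2 * (x ⬝ᵥ (Abarᵀ * P * Abar).mulVec x) := by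
      rw [hQm, Matrix.add_mulVec, dotProduct_add, Matrix.smul_mulVec,
        dotProduct_smul, smul_eq_mul]
    have eS : x ⬝ᵥ Sm.mulVec v
        = x ⬝ᵥ (Aᵀ * P * B).mulVec v + σ ^ 2 * (x ⬝ᵥ (Abarᵀ * P * Bbar).mulVec v) := by
      rw [hSm, Sop, Matrix.add_mulVec, dotProduct_add, Matrix.smul_mulVec,
        dotProduct_smul, smul_eq_mul]
    have eR : v ⬝ᵥ Rm.mulVec v
        = v ⬝ᵥ (Bᵀ * P * B).mulVec v + σ ^ 2 * (v ⬝ᵥ (Bbarᵀ * P * Bbar).mulVec v) := by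
      rw [hRm, Rop, Matrix.add_mulVec, dotProduct_add, Matrix.smul_mulVec,
        dotProduct_smul, smul_eq_mul]
    rw [e1, e2, eQ, eS, eR]
    ring
  have hRK : Rm * Km = Smᵀ := by
    rw [hKm, Kgain, ← hRm, ← hSm, ← Matrix.mul_assoc, hR1, Matrix.one_mul]
  have hKT : Kmᵀ = Sm * Rm⁻¹ := by
    rw [hKm, Kgain, ← hRm, ← hSm, Matrix.transpose_mul, Matrix.transpose_transpose, hRinvsym]
  have hΦ : Φm = Qm - Sm * Rm⁻¹ * Smᵀ := by
    rw [hΦm, Phi, ← hRm, ← hSm, ← hQm]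
  have key : ∀ (x : Fin n → ℝ) (v : Fin m → ℝ), qform σ A Abar B Bbar P x v
      = x ⬝ᵥ Φm.mulVec x + (v + Km.mulVec x) ⬝ᵥ Rm.mulVec (v + Km.mulVec x) := by
    intro x v
    have h1 : Rm.mulVec (Km.mulVec x) = Smᵀ.mulVec x := by
      rw [Matrix.mulVec_mulVec, hRK]
    have t1 : v ⬝ᵥ Rm.mulVec (Km.mulVec x) = x ⬝ᵥ Sm.mulVec v := by
      rw [h1, dp_comm, Matrix.transpose_transpose]
    have t2 : (Km.mulVec x) ⬝ᵥ Rm.mulVec v = x ⬝ᵥ Sm.mulVec v := by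
      rw [dp_comm, hRsym, h1, dp_comm, Matrix.transpose_transpose]
    have hKRK : Kmᵀ * Rm * Km = Sm * Rm⁻¹ * Smᵀ :=
      calc Kmᵀ * Rm * Km = Sm * Rm⁻¹ * (Rm * Km) := by rw [hKT, Matrix.mul_assoc]
        _ = Sm * Rm⁻¹ * Smᵀ := by rw [hRK]
    have t3 : (Km.mulVec x) ⬝ᵥ Rm.mulVec (Km.mulVec x)
        = x ⬝ᵥ (Sm * Rm⁻¹ * Smᵀ).mulVec x := by
      rw [dp3, hKRK]
    have hexp : (v + Km.mulVec x) ⬝ᵥ Rm.mulVec (v + Km.mulVec x)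
        = v ⬝ᵥ Rm.mulVec v + 2 * (x ⬝ᵥ Sm.mulVec v) + x ⬝ᵥ (Sm * Rm⁻¹ * Smᵀ).mulVec x := by
      rw [Matrix.mulVec_add, dotProduct_add, add_dotProduct, add_dotProduct, t1, t2, t3]
      ring
    have hΦx : x ⬝ᵥ Φm.mulVec x
        = x ⬝ᵥ Qm.mulVec x - x ⬝ᵥ (Sm * Rm⁻¹ * Smᵀ).mulVec x := by
      rw [hΦ, Matrix.sub_mulVec, dotProduct_sub]
    rw [hq x v, hexp, hΦx]
    ring
  have hRnn : ∀ w : Fin m → ℝ, 0 ≤ w ⬝ᵥ Rm.mulVec w := fun w => by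
    simpa using hRmpd.posSemidef.dotProduct_mulVec_nonneg w
  have hRzero : ∀ w : Fin m → ℝ, w ⬝ᵥ Rm.mulVec w = 0 → w = 0 := by
    intro w h
    by_contra hw
    have := hRmpd.dotProduct_mulVec_pos hw
    simp only [star_trivial] at this
    rw [h] at this
    exact lt_irrefl _ this
  have hmin : ∀ x : Fin n → ℝ,
      qform σ A Abar B Bbar P x (-(Km.mulVec x)) = x ⬝ᵥ Φm.mulVec x := by
    intro x
    rw [key x (-(Km.mulVec x))]
    simp
  have hlb : ∀ (x : Fin n → ℝ) (v : Fin m → ℝ),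
      x ⬝ᵥ Φm.mulVec x ≤ qform σ A Abar B Bbar P x v := fun x v => by
    rw [key x v]
    exact le_add_of_nonneg_right (hRnn _)
  have hinf : ∀ x : Fin n → ℝ,
      (⨅ v : Fin m → ℝ, qform σ A Abar B Bbar P x v) = x ⬝ᵥ Φm.mulVec x := by
    intro x
    apply le_antisymm
    · exact (ciInf_le ⟨x ⬝ᵥ Φm.mulVec x, by rintro y ⟨v, rfl⟩; exact hlb x v⟩
        (-(Km.mulVec x))).trans_eq (hmin x)
    · exact le_ciInf (hlb x)
  constructor
  · constructor
    · intro h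
      have h' : ∀ x : Fin n → ℝ, x ⬝ᵥ (Φm - Real.exp lam • P).mulVec x = 0 := by
        intro x
        have hx := h x
        rw [hinf x] at hx
        rw [Matrix.sub_mulVec, dotProduct_sub, Matrix.smul_mulVec, dotProduct_smul,
          smul_eq_mul]
        linarith
      have hΦsym : Φmᵀ = Φm := by
        rw [hΦ, Matrix.transpose_sub]
        congr 1
        · rw [hQm]
          simp [Matrix.transpose_add, Matrix.transpose_smul, Matrix.transpose_mul,
            Matrix.transpose_transpose, hPsym, Matrix.mul_assoc]
        · simp [Matrix.transpose_mul, Matrix.transpose_transpose, hRinvsym, Matrix.mul_assoc]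
      have hsub : (Φm - Real.exp lam • P)ᵀ = Φm - Real.exp lam • P := by
        rw [Matrix.transpose_sub, Matrix.transpose_smul, hΦsym, hPsym]
      have hz := sym_ext hsub h'
      exact sub_eq_zero.mp hz
    · intro h x
      rw [hinf x, h, Matrix.smul_mulVec, dotProduct_smul, smul_eq_mul]
  · intro _ x
    refine ⟨⟨⟨-(Km.mulVec x), rfl⟩, ?_⟩, ?_⟩
    · rintro y ⟨v, rfl⟩
      rw [hmin x]
      exact hlb x v
    · intro v hv
      rw [key x v, hmin x] at hv
      have h0 : (v + Km.mulVec x) ⬝ᵥ Rm.mulVec (v + Km.mulVec x) = 0 := by linarith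
      exact eq_neg_of_add_eq_zero_left (hRzero _ h0)


end SCS
end
end

section
/- Assume R₀ := BᵀB + σ²·B̄ᵀB̄ is positive definite. Fix τ ∈ (0,1) and let S_{δ_τ} := {X symmetric n×n : X ⪰ δ_τ·I and Tr X = 1}. Define Λ(τ) := (1−τ)·L_Φ(δ_τ)/τ + (1−τ)·((1−τ)·C_Φ(δ_τ) + τ/n)·n·L_Φ(δ_τ)/τ². Then: (a) for all P, Q ∈ S_{δ_τ}, ‖Φ̂_τ(P) − Φ̂_τ(Q)‖ ≤ Λ(τ)·‖P − Q‖; (b) if Λ(τ) < 1, then Φ̂_τ has a unique fixed point P^(τ) in S_{δ_τ}, and for every starting point P₀ ∈ S_{δ_τ} the iterates P_{k+1} := Φ̂_τ(P_k) satisfy ‖P_k − P^(τ)‖ ≤ Λ(τ)^k·‖P₀ − P^(τ)‖ for all k ∈ ℕ. -/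
open Matrix MeasureTheory ProbabilityTheory
open scoped ENNReal Classical

noncomputable section

namespace SCS

variable {n m : ℕ}

variable {Ω : Type} [MeasurableSpace Ω]

section Aux
variable {p q r : ℕ}

abbrev Euc (p : ℕ) := EuclideanSpace ℝ (Fin p)

def toE {p : ℕ} (x : Fin p → ℝ) : Euc p := (WithLp.linearEquiv 2 ℝ (Fin p → ℝ)).symm x

def CLMof {p q : ℕ} (M : Matrix (Fin p) (Fin q) ℝ) : Euc q →L[ℝ] Euc p :=
  LinearMap.toContinuousLinearMap (Matrix.toEuclideanLin M)

lemma CLMof_apply (M : Matrix (Fin p) (Fin q) ℝ) (x : Fin q → ℝ) :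
    CLMof M (toE x) = toE (M.mulVec x) := rfl

lemma toE_inner (x y : Fin p → ℝ) : inner ℝ (toE x) (toE y) = x ⬝ᵥ y := by
  simp [toE, PiLp.inner_apply, dotProduct, RCLike.inner_apply, mul_comm]

lemma toE_norm (x : Fin p → ℝ) : ‖toE x‖ = Real.sqrt (x ⬝ᵥ x) := by
  rw [← toE_inner x x, real_inner_self_eq_norm_sq, Real.sqrt_sq (norm_nonneg _)]

lemma dot_self_nonneg (x : Fin p → ℝ) : 0 ≤ x ⬝ᵥ x := by
  rw [← toE_inner x x]; exact real_inner_self_nonneg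

lemma abs_dot_le (x y : Fin p → ℝ) :
    |x ⬝ᵥ y| ≤ Real.sqrt (x ⬝ᵥ x) * Real.sqrt (y ⬝ᵥ y) := by
  rw [← toE_inner x y, ← toE_norm, ← toE_norm]
  exact abs_real_inner_le_norm _ _

lemma exists_unit (hp : 0 < p) : ∃ x : Fin p → ℝ, x ⬝ᵥ x = 1 := by
  refine ⟨Pi.single ⟨0, hp⟩ 1, ?_⟩
  simp [dotProduct, Pi.single_apply]

lemma rayleigh_eq_normsq (M : Matrix (Fin p) (Fin q) ℝ) (x : Fin q → ℝ) :
    x ⬝ᵥ (Mᵀ * M).mulVec x = ‖CLMof M (toE x)‖ ^ 2 := by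
  rw [← Matrix.mulVec_mulVec, Matrix.dotProduct_mulVec, Matrix.vecMul_transpose,
    CLMof_apply, ← real_inner_self_eq_norm_sq, toE_inner]

lemma rayleigh_abs_le (M : Matrix (Fin p) (Fin p) ℝ) {x : Fin p → ℝ} (hx : x ⬝ᵥ x = 1) :
    |x ⬝ᵥ M.mulVec x| ≤ ‖CLMof M‖ := by
  have h1 : ‖toE x‖ = 1 := by rw [toE_norm, hx, Real.sqrt_one]
  have : x ⬝ᵥ M.mulVec x = inner ℝ (toE x) (CLMof M (toE x)) := by
    rw [CLMof_apply, toE_inner]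
  rw [this]
  calc |inner ℝ (toE x) (CLMof M (toE x))| ≤ ‖toE x‖ * ‖CLMof M (toE x)‖ :=
        abs_real_inner_le_norm _ _
    _ ≤ ‖toE x‖ * (‖CLMof M‖ * ‖toE x‖) :=
        mul_le_mul_of_nonneg_left ((CLMof M).le_opNorm _) (norm_nonneg _)
    _ = ‖CLMof M‖ := by rw [h1]; ring

lemma bddAbove_rayleigh (M : Matrix (Fin p) (Fin p) ℝ) :
    BddAbove (Set.range fun x : {x : Fin p → ℝ // x ⬝ᵥ x = 1} => x.1 ⬝ᵥ M.mulVec x.1) := by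
  refine ⟨‖CLMof M‖, ?_⟩
  rintro _ ⟨x, rfl⟩
  exact (abs_le.mp (rayleigh_abs_le M x.2)).2

lemma bddBelow_rayleigh (M : Matrix (Fin p) (Fin p) ℝ) :
    BddBelow (Set.range fun x : {x : Fin p → ℝ // x ⬝ᵥ x = 1} => x.1 ⬝ᵥ M.mulVec x.1) := by
  refine ⟨-‖CLMof M‖, ?_⟩
  rintro _ ⟨x, rfl⟩
  exact (abs_le.mp (rayleigh_abs_le M x.2)).1

lemma rayleigh_le_lamMax (M : Matrix (Fin p) (Fin p) ℝ) (x : Fin p → ℝ) :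
    x ⬝ᵥ M.mulVec x ≤ lamMax M * (x ⬝ᵥ x) := by
  rcases eq_or_ne x 0 with rfl | hx
  · simp
  · have hxx : 0 < x ⬝ᵥ x := by
      rcases (dot_self_nonneg x).eq_or_lt with h | h
      · exfalso; apply hx
        have := toE_norm x
        rw [← h, Real.sqrt_zero] at this
        have : toE x = 0 := norm_eq_zero.mp this
        simpa [toE] using congrArg (WithLp.linearEquiv 2 ℝ (Fin p → ℝ)) this
      · exact h
    set t : ℝ := Real.sqrt (x ⬝ᵥ x) with ht
    have htpos : 0 < t := Real.sqrt_pos.mpr hxx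
    have ht2 : t ^ 2 = x ⬝ᵥ x := Real.sq_sqrt hxx.le
    set u : Fin p → ℝ := t⁻¹ • x with hu
    have huu : u ⬝ᵥ u = 1 := by
      rw [hu, smul_dotProduct, dotProduct_smul, smul_eq_mul, smul_eq_mul, ← mul_assoc]
      have : t⁻¹ * t⁻¹ * (x ⬝ᵥ x) = (x ⬝ᵥ x) / t ^ 2 := by ring
      rw [this, ht2, div_self hxx.ne']
    have hval : u ⬝ᵥ M.mulVec u = t⁻¹ * (t⁻¹ * (x ⬝ᵥ M.mulVec x)) := by
      rw [hu, smul_dotProduct, Matrix.mulVec_smul, dotProduct_smul, smul_eq_mul, smul_eq_mul]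
    have hle : u ⬝ᵥ M.mulVec u ≤ lamMax M :=
      le_ciSup (bddAbove_rayleigh M) (⟨u, huu⟩ : {x : Fin p → ℝ // x ⬝ᵥ x = 1})
    rw [hval] at hle
    have := mul_le_mul_of_nonneg_left hle (by positivity : (0:ℝ) ≤ t * t)
    calc x ⬝ᵥ M.mulVec x = (t * t) * (t⁻¹ * (t⁻¹ * (x ⬝ᵥ M.mulVec x))) := by
          field_simp
      _ ≤ (t * t) * lamMax M := this
      _ = lamMax M * (x ⬝ᵥ x) := by
          have : t * t = x ⬝ᵥ x := by rw [← ht2]; ring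
          rw [this]
          ring

lemma lamMin_mul_le_rayleigh (M : Matrix (Fin p) (Fin p) ℝ) (x : Fin p → ℝ) :
    lamMin M * (x ⬝ᵥ x) ≤ x ⬝ᵥ M.mulVec x := by
  rcases eq_or_ne x 0 with rfl | hx
  · simp
  · have hxx : 0 < x ⬝ᵥ x := by
      rcases (dot_self_nonneg x).eq_or_lt with h | h
      · exfalso; apply hx
        have := toE_norm x
        rw [← h, Real.sqrt_zero] at this
        have : toE x = 0 := norm_eq_zero.mp this
        simpa [toE] using congrArg (WithLp.linearEquiv 2 ℝ (Fin p → ℝ)) this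
      · exact h
    set t : ℝ := Real.sqrt (x ⬝ᵥ x) with ht
    have htpos : 0 < t := Real.sqrt_pos.mpr hxx
    have ht2 : t ^ 2 = x ⬝ᵥ x := Real.sq_sqrt hxx.le
    set u : Fin p → ℝ := t⁻¹ • x with hu
    have huu : u ⬝ᵥ u = 1 := by
      rw [hu, smul_dotProduct, dotProduct_smul, smul_eq_mul, smul_eq_mul, ← mul_assoc]
      have : t⁻¹ * t⁻¹ * (x ⬝ᵥ x) = (x ⬝ᵥ x) / t ^ 2 := by ring
      rw [this, ht2, div_self hxx.ne']
    have hval : u ⬝ᵥ M.mulVec u = t⁻¹ * (t⁻¹ * (x ⬝ᵥ M.mulVec x)) := by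
      rw [hu, smul_dotProduct, Matrix.mulVec_smul, dotProduct_smul, smul_eq_mul, smul_eq_mul]
    have hle : lamMin M ≤ u ⬝ᵥ M.mulVec u :=
      ciInf_le (bddBelow_rayleigh M) (⟨u, huu⟩ : {x : Fin p → ℝ // x ⬝ᵥ x = 1})
    rw [hval] at hle
    have h2 := mul_le_mul_of_nonneg_left hle (by positivity : (0:ℝ) ≤ t * t)
    have htt : t * t = x ⬝ᵥ x := by rw [← ht2]; ring
    calc lamMin M * (x ⬝ᵥ x) = (t * t) * lamMin M := by rw [htt]; ring
      _ ≤ (t * t) * (t⁻¹ * (t⁻¹ * (x ⬝ᵥ M.mulVec x))) := h2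
      _ = x ⬝ᵥ M.mulVec x := by field_simp


lemma lamMax_MtM_eq (hq : 0 < q) (M : Matrix (Fin p) (Fin q) ℝ) :
    lamMax (Mᵀ * M) = ‖CLMof M‖ ^ 2 := by
  obtain ⟨e, he⟩ := exists_unit hq
  have hba : BddAbove (Set.range fun x : {x : Fin q → ℝ // x ⬝ᵥ x = 1} =>
      x.1 ⬝ᵥ (Mᵀ * M).mulVec x.1) := bddAbove_rayleigh _
  have hnonneg : 0 ≤ lamMax (Mᵀ * M) := by
    have := le_ciSup hba (⟨e, he⟩ : {x : Fin q → ℝ // x ⬝ᵥ x = 1})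
    rw [rayleigh_eq_normsq] at this
    exact le_trans (by positivity) this
  haveI : Nonempty {x : Fin q → ℝ // x ⬝ᵥ x = 1} := ⟨⟨e, he⟩⟩
  refine le_antisymm ?_ ?_
  · refine ciSup_le (fun x => ?_)
    rw [rayleigh_eq_normsq]
    have h1 : ‖toE x.1‖ = 1 := by rw [toE_norm, x.2, Real.sqrt_one]
    calc ‖CLMof M (toE x.1)‖ ^ 2 ≤ (‖CLMof M‖ * ‖toE x.1‖) ^ 2 := by
          have := (CLMof M).le_opNorm (toE x.1)
          exact pow_le_pow_left₀ (norm_nonneg _) this 2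
      _ = ‖CLMof M‖ ^ 2 := by rw [h1]; ring
  · have hb : ‖CLMof M‖ ≤ Real.sqrt (lamMax (Mᵀ * M)) := by
      refine (CLMof M).opNorm_le_bound (Real.sqrt_nonneg _) (fun y => ?_)
      set x : Fin q → ℝ := (WithLp.linearEquiv 2 ℝ (Fin q → ℝ)) y with hxdef
      have hxy : toE x = y := by simp [toE, hxdef]
      have key : ‖CLMof M y‖ ^ 2 ≤ lamMax (Mᵀ * M) * ‖y‖ ^ 2 := by
        rw [← hxy, ← rayleigh_eq_normsq]
        have := rayleigh_le_lamMax (Mᵀ * M) x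
        calc x ⬝ᵥ (Mᵀ * M).mulVec x ≤ lamMax (Mᵀ * M) * (x ⬝ᵥ x) := this
          _ = lamMax (Mᵀ * M) * ‖toE x‖ ^ 2 := by
              rw [← toE_inner x x, real_inner_self_eq_norm_sq]
      have h2 : ‖CLMof M y‖ ^ 2 ≤ (Real.sqrt (lamMax (Mᵀ * M)) * ‖y‖) ^ 2 := by
        rw [mul_pow, Real.sq_sqrt hnonneg]; exact key
      have h3 := Real.sqrt_le_sqrt h2
      rwa [Real.sqrt_sq (norm_nonneg _), Real.sqrt_sq (by positivity)] at h3
    calc ‖CLMof M‖ ^ 2 ≤ Real.sqrt (lamMax (Mᵀ * M)) ^ 2 :=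
          pow_le_pow_left₀ (norm_nonneg _) hb 2
      _ = lamMax (Mᵀ * M) := Real.sq_sqrt hnonneg

lemma specNorm_eq_opNorm (hq : 0 < q) (M : Matrix (Fin p) (Fin q) ℝ) :
    specNorm M = ‖CLMof M‖ := by
  rw [specNorm, lamMax_MtM_eq hq, Real.sqrt_sq (norm_nonneg _)]


lemma specNorm_nonneg (M : Matrix (Fin p) (Fin q) ℝ) : 0 ≤ specNorm M :=
  Real.sqrt_nonneg _

lemma CLMof_apply' (M : Matrix (Fin p) (Fin q) ℝ) (y : Euc q) :
    CLMof M y = toE (M.mulVec ((WithLp.linearEquiv 2 ℝ (Fin q → ℝ)) y)) := rfl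

lemma CLMof_add (M N : Matrix (Fin p) (Fin q) ℝ) : CLMof (M + N) = CLMof M + CLMof N := by
  simp [CLMof, map_add]

lemma CLMof_sub (M N : Matrix (Fin p) (Fin q) ℝ) : CLMof (M - N) = CLMof M - CLMof N := by
  simp [CLMof, map_sub]

lemma CLMof_smul (c : ℝ) (M : Matrix (Fin p) (Fin q) ℝ) : CLMof (c • M) = c • CLMof M := by
  simp [CLMof, _root_.map_smul]

lemma CLMof_mul (M : Matrix (Fin p) (Fin q) ℝ) (N : Matrix (Fin q) (Fin r) ℝ) :
    CLMof (M * N) = (CLMof M).comp (CLMof N) := by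
  refine ContinuousLinearMap.ext (fun y => ?_)
  simp [CLMof_apply', toE, ← Matrix.mulVec_mulVec]

lemma CLMof_injective : Function.Injective (CLMof (p := p) (q := q)) := by
  intro M N h
  have := LinearMap.toContinuousLinearMap.injective h
  exact Matrix.toEuclideanLin.injective this

lemma specNorm_add_le (hq : 0 < q) (M N : Matrix (Fin p) (Fin q) ℝ) :
    specNorm (M + N) ≤ specNorm M + specNorm N := by
  rw [specNorm_eq_opNorm hq, specNorm_eq_opNorm hq, specNorm_eq_opNorm hq, CLMof_add]
  exact norm_add_le _ _

lemma specNorm_sub_le (hq : 0 < q) (M N : Matrix (Fin p) (Fin q) ℝ) :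
    specNorm (M - N) ≤ specNorm M + specNorm N := by
  rw [specNorm_eq_opNorm hq, specNorm_eq_opNorm hq, specNorm_eq_opNorm hq, CLMof_sub]
  exact norm_sub_le _ _

lemma specNorm_smul (hq : 0 < q) (c : ℝ) (M : Matrix (Fin p) (Fin q) ℝ) :
    specNorm (c • M) = |c| * specNorm M := by
  rw [specNorm_eq_opNorm hq, specNorm_eq_opNorm hq, CLMof_smul]
  rw [show |c| = ‖c‖ from (Real.norm_eq_abs c).symm]
  exact norm_smul c (CLMof M)

lemma specNorm_mul_le (hq : 0 < q) (hr : 0 < r) (M : Matrix (Fin p) (Fin q) ℝ)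
    (N : Matrix (Fin q) (Fin r) ℝ) : specNorm (M * N) ≤ specNorm M * specNorm N := by
  rw [specNorm_eq_opNorm hr, specNorm_eq_opNorm hq, specNorm_eq_opNorm hr, CLMof_mul]
  exact ContinuousLinearMap.opNorm_comp_le _ _

lemma conjTranspose_eq_transpose (M : Matrix (Fin p) (Fin q) ℝ) : Mᴴ = Mᵀ := by
  ext i j; simp [Matrix.conjTranspose_apply]

lemma specNorm_transpose (hp : 0 < p) (hq : 0 < q) (M : Matrix (Fin p) (Fin q) ℝ) :
    specNorm Mᵀ = specNorm M := by
  rw [specNorm_eq_opNorm hp, specNorm_eq_opNorm hq, ← conjTranspose_eq_transpose]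
  show ‖LinearMap.toContinuousLinearMap (Matrix.toEuclideanLin Mᴴ)‖ = _
  rw [Matrix.toEuclideanLin_conjTranspose_eq_adjoint, LinearMap.adjoint_toContinuousLinearMap]
  exact ContinuousLinearMap.adjoint.norm_map _

lemma eq_zero_of_specNorm_eq_zero (hq : 0 < q) {M : Matrix (Fin p) (Fin q) ℝ}
    (h : specNorm M = 0) : M = 0 := by
  rw [specNorm_eq_opNorm hq] at h
  have : CLMof M = 0 := norm_eq_zero.mp h
  have h0 : CLMof M = CLMof 0 := by
    rw [this]; simp [CLMof, map_zero]
  exact CLMof_injective h0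

lemma specNorm_one_le (hp : 0 < p) : specNorm (1 : Matrix (Fin p) (Fin p) ℝ) ≤ 1 := by
  rw [specNorm_eq_opNorm hp]
  refine ContinuousLinearMap.opNorm_le_bound _ zero_le_one (fun y => ?_)
  have : CLMof (1 : Matrix (Fin p) (Fin p) ℝ) y = y := by
    simp [CLMof_apply', toE, Matrix.one_mulVec]
  rw [this, one_mul]

lemma abs_entry_le_specNorm (hq : 0 < q) (M : Matrix (Fin p) (Fin q) ℝ) (i : Fin p) (j : Fin q) :
    |M i j| ≤ specNorm M := by
  have hMij : M i j = (Pi.single i 1 : Fin p → ℝ) ⬝ᵥ M.mulVec (Pi.single j 1) := by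
    simp [single_dotProduct, Matrix.mulVec_single]
  have hinner : M i j = inner ℝ (toE (Pi.single i 1 : Fin p → ℝ))
      (CLMof M (toE (Pi.single j 1 : Fin q → ℝ))) := by
    rw [CLMof_apply, toE_inner, hMij]
  have h1 : ‖toE (Pi.single i 1 : Fin p → ℝ)‖ = 1 := by
    rw [toE_norm]
    simp [dotProduct, Pi.single_apply]
  have h2 : ‖toE (Pi.single j 1 : Fin q → ℝ)‖ = 1 := by
    rw [toE_norm]
    simp [dotProduct, Pi.single_apply]
  rw [hinner, specNorm_eq_opNorm hq]
  calc |inner ℝ (toE (Pi.single i 1 : Fin p → ℝ)) (CLMof M (toE (Pi.single j 1 : Fin q → ℝ)))|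
      ≤ ‖toE (Pi.single i 1 : Fin p → ℝ)‖ * ‖CLMof M (toE (Pi.single j 1 : Fin q → ℝ))‖ :=
        abs_real_inner_le_norm _ _
    _ ≤ ‖toE (Pi.single i 1 : Fin p → ℝ)‖ * (‖CLMof M‖ * ‖toE (Pi.single j 1 : Fin q → ℝ)‖) :=
        mul_le_mul_of_nonneg_left ((CLMof M).le_opNorm _) (norm_nonneg _)
    _ = ‖CLMof M‖ := by rw [h1, h2]; ring

lemma abs_trace_le (hp : 0 < p) (M : Matrix (Fin p) (Fin p) ℝ) :
    |M.trace| ≤ p * specNorm M := by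
  rw [Matrix.trace]
  calc |∑ i, M.diag i| ≤ ∑ i : Fin p, |M.diag i| := Finset.abs_sum_le_sum_abs _ _
    _ ≤ ∑ _i : Fin p, specNorm M := by
        refine Finset.sum_le_sum (fun i _ => ?_)
        exact abs_entry_le_specNorm hp M i i
    _ = p * specNorm M := by simp [Finset.sum_const, nsmul_eq_mul]


lemma psd_dot {M : Matrix (Fin p) (Fin p) ℝ} (hM : M.PosSemidef) (x : Fin p → ℝ) :
    0 ≤ x ⬝ᵥ M.mulVec x := by simpa using hM.dotProduct_mulVec_nonneg x

lemma herm_of_symm {M : Matrix (Fin p) (Fin p) ℝ} (h : M.IsSymm) : M.IsHermitian := by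
  rw [Matrix.IsHermitian, conjTranspose_eq_transpose]; exact h

lemma symm_of_herm {M : Matrix (Fin p) (Fin p) ℝ} (h : M.IsHermitian) : M.IsSymm := by
  rw [Matrix.IsSymm, ← conjTranspose_eq_transpose]; exact h

lemma posSemidef_of_forall {M : Matrix (Fin p) (Fin p) ℝ} (hsym : M.IsSymm)
    (h : ∀ x, 0 ≤ x ⬝ᵥ M.mulVec x) : M.PosSemidef :=
  .of_dotProduct_mulVec_nonneg (herm_of_symm hsym) (fun x => by simpa using h x)

lemma dot_self_pos_of_ne {x : Fin p → ℝ} (hx : x ≠ 0) : 0 < x ⬝ᵥ x := by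
  rcases (dot_self_nonneg x).eq_or_lt with h | h
  · exfalso; apply hx
    have h2 := toE_norm x
    rw [← h, Real.sqrt_zero] at h2
    have h3 : toE x = 0 := norm_eq_zero.mp h2
    simpa [toE] using congrArg (WithLp.linearEquiv 2 ℝ (Fin p → ℝ)) h3
  · exact h

lemma psd_smul {M : Matrix (Fin p) (Fin p) ℝ} {a : ℝ} (ha : 0 ≤ a) (hM : M.PosSemidef) :
    (a • M).PosSemidef := by
  refine posSemidef_of_forall ?_ (fun x => ?_)
  · rw [Matrix.IsSymm, Matrix.transpose_smul, symm_of_herm hM.1]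
  · rw [Matrix.smul_mulVec, dotProduct_smul, smul_eq_mul]
    exact mul_nonneg ha (psd_dot hM x)

lemma psd_smul_one {a : ℝ} (ha : 0 ≤ a) : ((a • (1 : Matrix (Fin p) (Fin p) ℝ))).PosSemidef :=
  psd_smul ha Matrix.PosSemidef.one

lemma trace_nonneg_of_psd {M : Matrix (Fin p) (Fin p) ℝ} (hM : M.PosSemidef) : 0 ≤ M.trace := by
  rw [Matrix.trace]
  refine Finset.sum_nonneg (fun i _ => ?_)
  have := psd_dot hM (Pi.single i 1)
  simpa [single_dotProduct, Matrix.mulVec_single, Matrix.diag] using this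

lemma trace_transpose_mul_self_nonneg (C : Matrix (Fin p) (Fin q) ℝ) : 0 ≤ (Cᵀ * C).trace := by
  rw [Matrix.trace]
  refine Finset.sum_nonneg (fun j _ => ?_)
  simp only [Matrix.diag, Matrix.mul_apply, Matrix.transpose_apply]
  exact Finset.sum_nonneg (fun i _ => mul_self_nonneg _)

lemma frob_bound (C : Matrix (Fin p) (Fin q) ℝ) (x : Fin q → ℝ) :
    (C.mulVec x) ⬝ᵥ (C.mulVec x) ≤ (Cᵀ * C).trace * (x ⬝ᵥ x) := by
  have hx : x ⬝ᵥ x = ∑ j, x j ^ 2 := by simp [dotProduct, pow_two]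
  have key : ∀ i, (C.mulVec x i) ^ 2 ≤ (∑ j, C i j ^ 2) * (x ⬝ᵥ x) := by
    intro i
    rw [hx]
    simpa [Matrix.mulVec, dotProduct] using
      Finset.sum_mul_sq_le_sq_mul_sq Finset.univ (fun j => C i j) x
  have htr : (Cᵀ * C).trace = ∑ i, ∑ j, C i j ^ 2 := by
    rw [Matrix.trace]
    simp only [Matrix.diag, Matrix.mul_apply, Matrix.transpose_apply]
    rw [Finset.sum_comm]
    simp [pow_two]
  calc (C.mulVec x) ⬝ᵥ (C.mulVec x) = ∑ i, (C.mulVec x i) ^ 2 := by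
        simp [dotProduct, pow_two]
    _ ≤ ∑ i, (∑ j, C i j ^ 2) * (x ⬝ᵥ x) := Finset.sum_le_sum (fun i _ => key i)
    _ = (Cᵀ * C).trace * (x ⬝ᵥ x) := by rw [htr, Finset.sum_mul]

lemma specNorm_le_sqrt_trace (hq : 0 < q) (C : Matrix (Fin p) (Fin q) ℝ) :
    specNorm C ≤ Real.sqrt ((Cᵀ * C).trace) := by
  rw [specNorm_eq_opNorm hq]
  refine ContinuousLinearMap.opNorm_le_bound _ (Real.sqrt_nonneg _) (fun y => ?_)
  set x : Fin q → ℝ := (WithLp.linearEquiv 2 ℝ (Fin q → ℝ)) y with hxdef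
  have hxy : toE x = y := by simp [toE, hxdef]
  rw [← hxy, CLMof_apply, toE_norm, toE_norm, ← Real.sqrt_mul (trace_transpose_mul_self_nonneg C)]
  exact Real.sqrt_le_sqrt (frob_bound C x)

section SqrtAux
open scoped MatrixOrder

lemma specNorm_psd_le_trace (hp : 0 < p) {P : Matrix (Fin p) (Fin p) ℝ} (hP : P.PosSemidef) :
    specNorm P ≤ P.trace := by
  set C := CFC.sqrt P with hC
  have hCsym : Cᵀ = C := by
    rw [← conjTranspose_eq_transpose]; exact (nonneg_iff_posSemidef.mp (CFC.sqrt_nonneg P)).1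
  have hCC : C * C = P := CFC.sqrt_mul_sqrt_self P (nonneg_iff_posSemidef.mpr hP)
  have htr : (Cᵀ * C).trace = P.trace := by rw [hCsym, hCC]
  have h1 : specNorm C ≤ Real.sqrt P.trace := by
    have := specNorm_le_sqrt_trace hp C
    rwa [htr] at this
  calc specNorm P = specNorm (C * C) := by rw [hCC]
    _ ≤ specNorm C * specNorm C := specNorm_mul_le hp hp C C
    _ ≤ Real.sqrt P.trace * Real.sqrt P.trace :=
        mul_le_mul h1 h1 (specNorm_nonneg _) (Real.sqrt_nonneg _)
    _ = P.trace := Real.mul_self_sqrt (trace_nonneg_of_psd hP)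

lemma trace_mul_nonneg {P M : Matrix (Fin p) (Fin p) ℝ} (hP : P.PosSemidef)
    (hM : M.PosSemidef) : 0 ≤ (P * M).trace := by
  set C := CFC.sqrt P with hC
  have hCherm : Cᴴ = C := (nonneg_iff_posSemidef.mp (CFC.sqrt_nonneg P)).1
  have hCC : C * C = P := CFC.sqrt_mul_sqrt_self P (nonneg_iff_posSemidef.mpr hP)
  have h1 : (P * M).trace = (C * M * C).trace := by
    rw [← hCC, Matrix.mul_assoc, Matrix.trace_mul_comm C (C * M), Matrix.mul_assoc]
  have h2 : (C * M * C).PosSemidef := by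
    have := hM.conjTranspose_mul_mul_same C
    rwa [hCherm] at this
  rw [h1]
  exact trace_nonneg_of_psd h2

end SqrtAux

lemma lamMax_smul_one_sub_psd {N : Matrix (Fin p) (Fin p) ℝ} (hsym : N.IsSymm) :
    (lamMax N • (1 : Matrix (Fin p) (Fin p) ℝ) - N).PosSemidef := by
  refine posSemidef_of_forall ?_ (fun x => ?_)
  · rw [Matrix.IsSymm, Matrix.transpose_sub, Matrix.transpose_smul, Matrix.transpose_one, hsym]
  · rw [Matrix.sub_mulVec, dotProduct_sub, Matrix.smul_mulVec, Matrix.one_mulVec,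
      dotProduct_smul, smul_eq_mul]
    have := rayleigh_le_lamMax N x
    linarith

lemma sub_lamMin_smul_one_psd {N : Matrix (Fin p) (Fin p) ℝ} (hsym : N.IsSymm) :
    (N - lamMin N • (1 : Matrix (Fin p) (Fin p) ℝ)).PosSemidef := by
  refine posSemidef_of_forall ?_ (fun x => ?_)
  · rw [Matrix.IsSymm, Matrix.transpose_sub, Matrix.transpose_smul, Matrix.transpose_one, hsym]
  · rw [Matrix.sub_mulVec, dotProduct_sub, Matrix.smul_mulVec, Matrix.one_mulVec,
      dotProduct_smul, smul_eq_mul]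
    have := lamMin_mul_le_rayleigh N x
    linarith

lemma lamMin_pos (hp : 0 < p) {M : Matrix (Fin p) (Fin p) ℝ} (hM : M.PosDef) :
    0 < lamMin M := by
  obtain ⟨e, he⟩ := exists_unit hp
  set S : Set (Fin p → ℝ) := {x | x ⬝ᵥ x = 1} with hS
  have hcont : Continuous fun x : Fin p → ℝ => x ⬝ᵥ M.mulVec x := by
    simp only [dotProduct, Matrix.mulVec]
    exact continuous_finset_sum _ fun i _ =>
      (continuous_apply i).mul (continuous_finset_sum _ fun j _ =>
        (continuous_const.mul (continuous_apply j)))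
  have hdotc : Continuous fun x : Fin p → ℝ => x ⬝ᵥ x := by
    simp only [dotProduct]
    exact continuous_finset_sum _ fun i _ => (continuous_apply i).mul (continuous_apply i)
  have hclosed : IsClosed S := isClosed_eq hdotc continuous_const
  have hbdd : Bornology.IsBounded S := by
    rw [Metric.isBounded_iff_subset_closedBall 0]
    refine ⟨1, fun x hx => ?_⟩
    rw [Metric.mem_closedBall, dist_zero_right]
    rw [pi_norm_le_iff_of_nonneg zero_le_one]
    intro i
    have hterm : x i * x i ≤ 1 := by
      have : ∑ j, x j * x j = 1 := hx
      have hle := Finset.single_le_sum (f := fun j => x j * x j)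
        (fun j _ => mul_self_nonneg (x j)) (Finset.mem_univ i)
      rw [this] at hle
      exact hle
    rw [Real.norm_eq_abs]
    nlinarith [abs_nonneg (x i), sq_abs (x i)]
  have hcompact : IsCompact S := Metric.isCompact_of_isClosed_isBounded hclosed hbdd
  obtain ⟨x₀, hx₀S, hmin⟩ := hcompact.exists_isMinOn ⟨e, he⟩ hcont.continuousOn
  haveI : Nonempty {x : Fin p → ℝ // x ⬝ᵥ x = 1} := ⟨⟨e, he⟩⟩
  have hx₀ : x₀ ≠ 0 := by
    intro h0
    have : (0 : Fin p → ℝ) ⬝ᵥ (0 : Fin p → ℝ) = 1 := by rw [← h0]; exact hx₀S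
    simp at this
  have hpos : 0 < x₀ ⬝ᵥ M.mulVec x₀ := by simpa using hM.dotProduct_mulVec_pos hx₀
  have : x₀ ⬝ᵥ M.mulVec x₀ ≤ lamMin M := by
    refine le_ciInf (fun x => ?_)
    exact hmin x.2
  linarith

lemma CLMof_one_apply (y : Euc p) : CLMof (1 : Matrix (Fin p) (Fin p) ℝ) y = y := by
  simp [CLMof_apply', toE, Matrix.one_mulVec]

lemma posDef_of_ge {M : Matrix (Fin p) (Fin p) ℝ} {a : ℝ} (ha : 0 < a)
    (hsym : M.IsSymm) (h : (M - a • (1 : Matrix (Fin p) (Fin p) ℝ)).PosSemidef) : M.PosDef := by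
  refine .of_dotProduct_mulVec_pos (herm_of_symm hsym) (fun x hx => ?_)
  have h1 := psd_dot h x
  rw [Matrix.sub_mulVec, dotProduct_sub, Matrix.smul_mulVec, Matrix.one_mulVec,
    dotProduct_smul, smul_eq_mul] at h1
  have h2 : 0 < a * (x ⬝ᵥ x) := mul_pos ha (dot_self_pos_of_ne hx)
  have : (0:ℝ) < x ⬝ᵥ M.mulVec x := by linarith
  simpa using this

lemma specNorm_inv_le {M : Matrix (Fin p) (Fin p) ℝ} (hp : 0 < p) {a : ℝ} (ha : 0 < a)
    (hsym : M.IsSymm) (h : (M - a • (1 : Matrix (Fin p) (Fin p) ℝ)).PosSemidef) :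
    specNorm M⁻¹ ≤ 1 / a := by
  have hPD := posDef_of_ge ha hsym h
  have hdet : IsUnit M.det := isUnit_iff_ne_zero.mpr hPD.det_pos.ne'
  have hMinv : M * M⁻¹ = 1 := Matrix.mul_nonsing_inv _ hdet
  have hlower : ∀ z : Euc p, a * ‖z‖ ≤ ‖CLMof M z‖ := by
    intro z
    set zv : Fin p → ℝ := (WithLp.linearEquiv 2 ℝ (Fin p → ℝ)) z with hzv
    have hz : toE zv = z := by simp [toE, hzv]
    have h1 : a * (zv ⬝ᵥ zv) ≤ zv ⬝ᵥ M.mulVec zv := by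
      have := psd_dot h zv
      rw [Matrix.sub_mulVec, dotProduct_sub, Matrix.smul_mulVec, Matrix.one_mulVec,
        dotProduct_smul, smul_eq_mul] at this
      linarith
    have h2 : zv ⬝ᵥ M.mulVec zv ≤ ‖z‖ * ‖CLMof M z‖ := by
      have habs := abs_dot_le zv (M.mulVec zv)
      rw [← hz]
      calc zv ⬝ᵥ M.mulVec zv ≤ |zv ⬝ᵥ M.mulVec zv| := le_abs_self _
        _ ≤ Real.sqrt (zv ⬝ᵥ zv) * Real.sqrt ((M.mulVec zv) ⬝ᵥ (M.mulVec zv)) := habs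
        _ = ‖toE zv‖ * ‖CLMof M (toE zv)‖ := by rw [toE_norm, CLMof_apply, toE_norm]
    have hnz : a * ‖z‖ ^ 2 ≤ ‖z‖ * ‖CLMof M z‖ := by
      have hzz : zv ⬝ᵥ zv = ‖z‖ ^ 2 := by
        rw [← hz, toE_norm, Real.sq_sqrt (dot_self_nonneg zv)]
      calc a * ‖z‖ ^ 2 = a * (zv ⬝ᵥ zv) := by rw [hzz]
        _ ≤ zv ⬝ᵥ M.mulVec zv := h1
        _ ≤ ‖z‖ * ‖CLMof M z‖ := h2
    rcases eq_or_ne ‖z‖ 0 with hz0 | hz0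
    · rw [hz0, mul_zero]; exact norm_nonneg _
    · have hzpos : 0 < ‖z‖ := (norm_nonneg z).lt_of_ne' hz0
      have := hnz
      rw [pow_two] at this
      nlinarith
  rw [specNorm_eq_opNorm hp]
  refine ContinuousLinearMap.opNorm_le_bound _ (by positivity) (fun y => ?_)
  set z := CLMof M⁻¹ y with hzdef
  have hMz : CLMof M z = y := by
    rw [hzdef, ← ContinuousLinearMap.comp_apply, ← CLMof_mul, hMinv, CLMof_one_apply]
  have := hlower z
  rw [hMz] at this
  rw [div_mul_eq_mul_div, le_div_iff₀ ha]
  linarith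


lemma lamMax_nonneg_of_psd (hp : 0 < p) {M : Matrix (Fin p) (Fin p) ℝ} (hM : M.PosSemidef) :
    0 ≤ lamMax M := by
  obtain ⟨e, he⟩ := exists_unit hp
  have := le_ciSup (bddAbove_rayleigh M) (⟨e, he⟩ : {x : Fin p → ℝ // x ⬝ᵥ x = 1})
  exact le_trans (psd_dot hM e) this

lemma specNorm_mul3_le {s : ℕ} (hq : 0 < q) (hr : 0 < r) (hs : 0 < s)
    (X : Matrix (Fin p) (Fin q) ℝ) (Y : Matrix (Fin q) (Fin r) ℝ)
    (Z : Matrix (Fin r) (Fin s) ℝ) :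
    specNorm (X * Y * Z) ≤ specNorm X * specNorm Y * specNorm Z := by
  calc specNorm (X * Y * Z) ≤ specNorm (X * Y) * specNorm Z := specNorm_mul_le hr hs _ _
    _ ≤ specNorm X * specNorm Y * specNorm Z := by
        have h1 := specNorm_mul_le hq hr X Y
        exact mul_le_mul_of_nonneg_right h1 (specNorm_nonneg _)

end Aux

section Main
variable {n m : ℕ}

lemma slice_psd {a : ℝ} (ha : 0 ≤ a) {P : Matrix (Fin n) (Fin n) ℝ}
    (hP : P ∈ Slice a) : P.PosSemidef := by
  have h1 : P = (P - a • (1 : Matrix (Fin n) (Fin n) ℝ)) + a • 1 := by abel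
  rw [h1]
  exact hP.2.1.add (psd_smul_one ha)

lemma slice_norm_le_one (hn : 0 < n) {a : ℝ} (ha : 0 ≤ a) {P : Matrix (Fin n) (Fin n) ℝ}
    (hP : P ∈ Slice a) : specNorm P ≤ 1 := by
  have := specNorm_psd_le_trace hn (slice_psd ha hP)
  rwa [hP.2.2] at this

lemma CA_psd (σ : ℝ) (A Abar : Matrix (Fin n) (Fin n) ℝ) :
    (A * Aᵀ + σ ^ 2 • (Abar * Abarᵀ)).PosSemidef := by
  have h1 : (A * Aᵀ).PosSemidef := by
    have := Matrix.posSemidef_self_mul_conjTranspose A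
    rwa [conjTranspose_eq_transpose] at this
  have h2 : (Abar * Abarᵀ).PosSemidef := by
    have := Matrix.posSemidef_self_mul_conjTranspose Abar
    rwa [conjTranspose_eq_transpose] at this
  exact h1.add (psd_smul (sq_nonneg σ) h2)

lemma CA_nonneg (hn : 0 < n) (σ : ℝ) (A Abar : Matrix (Fin n) (Fin n) ℝ) :
    0 ≤ CA σ A Abar :=
  lamMax_nonneg_of_psd hn (CA_psd σ A Abar)

lemma deltaTau_pos (hn : 0 < n) (σ : ℝ) (A Abar : Matrix (Fin n) (Fin n) ℝ)
    {τ : ℝ} (hτ : τ ∈ Set.Ioo (0:ℝ) 1) : 0 < deltaTau σ A Abar τ := by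
  have h1 : 0 < (1 - τ) * CA σ A Abar + τ := by
    have := CA_nonneg hn σ A Abar
    nlinarith [hτ.1, hτ.2]
  have h2 : 0 < τ / (n : ℝ) := div_pos hτ.1 (by exact_mod_cast hn)
  exact div_pos h2 h1

lemma deltaTau_mul (hn : 0 < n) (σ : ℝ) (A Abar : Matrix (Fin n) (Fin n) ℝ)
    {τ : ℝ} (hτ : τ ∈ Set.Ioo (0:ℝ) 1) :
    deltaTau σ A Abar τ * ((1 - τ) * CA σ A Abar + τ) = τ / (n : ℝ) := by
  have h1 : 0 < (1 - τ) * CA σ A Abar + τ := by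
    have := CA_nonneg hn σ A Abar
    nlinarith [hτ.1, hτ.2]
  rw [deltaTau, div_mul_cancel₀ _ h1.ne']

section Fixed
variable (σ : ℝ) (A Abar : Matrix (Fin n) (Fin n) ℝ) (B Bbar : Matrix (Fin n) (Fin m) ℝ)

lemma Rop_symm {P : Matrix (Fin n) (Fin n) ℝ} (hP : P.IsSymm) :
    (Rop σ B Bbar P).IsSymm := by
  rw [Matrix.IsSymm, Rop]
  simp [Matrix.transpose_add, Matrix.transpose_smul, Matrix.transpose_mul, Matrix.mul_assoc, hP.eq]

lemma Rop_linear (P Q : Matrix (Fin n) (Fin n) ℝ) :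
    Rop σ B Bbar P - Rop σ B Bbar Q = Rop σ B Bbar (P - Q) := by
  simp only [Rop, Matrix.mul_sub, Matrix.sub_mul, smul_sub]
  abel

lemma Sop_linear (P Q : Matrix (Fin n) (Fin n) ℝ) :
    Sop σ A Abar B Bbar P - Sop σ A Abar B Bbar Q = Sop σ A Abar B Bbar (P - Q) := by
  simp only [Sop, Matrix.mul_sub, Matrix.sub_mul, smul_sub]
  abel

lemma specNorm_Sop_le (hn : 0 < n) (hm : 0 < m) (P : Matrix (Fin n) (Fin n) ℝ) :
    specNorm (Sop σ A Abar B Bbar P) ≤ alphaS σ A Abar B Bbar * specNorm P := by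
  have h1 : specNorm (Aᵀ * P * B) ≤ specNorm A * specNorm P * specNorm B := by
    have := specNorm_mul3_le hn hn hm Aᵀ P B
    rwa [specNorm_transpose hn hn] at this
  have h2 : specNorm (Abarᵀ * P * Bbar) ≤ specNorm Abar * specNorm P * specNorm Bbar := by
    have := specNorm_mul3_le hn hn hm Abarᵀ P Bbar
    rwa [specNorm_transpose hn hn] at this
  calc specNorm (Sop σ A Abar B Bbar P)
      ≤ specNorm (Aᵀ * P * B) + specNorm (σ ^ 2 • (Abarᵀ * P * Bbar)) :=
        specNorm_add_le hm _ _
    _ = specNorm (Aᵀ * P * B) + σ ^ 2 * specNorm (Abarᵀ * P * Bbar) := by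
        rw [specNorm_smul hm, abs_of_nonneg (sq_nonneg σ)]
    _ ≤ specNorm A * specNorm P * specNorm B + σ ^ 2 * (specNorm Abar * specNorm P * specNorm Bbar) := by
        have := mul_le_mul_of_nonneg_left h2 (sq_nonneg σ)
        linarith
    _ = alphaS σ A Abar B Bbar * specNorm P := by rw [alphaS]; ring

lemma specNorm_Rop_le (hn : 0 < n) (hm : 0 < m) (P : Matrix (Fin n) (Fin n) ℝ) :
    specNorm (Rop σ B Bbar P) ≤ alphaR σ B Bbar * specNorm P := by
  have h1 : specNorm (Bᵀ * P * B) ≤ specNorm B * specNorm P * specNorm B := by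
    have := specNorm_mul3_le hn hn hm Bᵀ P B
    rwa [specNorm_transpose hn hm] at this
  have h2 : specNorm (Bbarᵀ * P * Bbar) ≤ specNorm Bbar * specNorm P * specNorm Bbar := by
    have := specNorm_mul3_le hn hn hm Bbarᵀ P Bbar
    rwa [specNorm_transpose hn hm] at this
  calc specNorm (Rop σ B Bbar P)
      ≤ specNorm (Bᵀ * P * B) + specNorm (σ ^ 2 • (Bbarᵀ * P * Bbar)) :=
        specNorm_add_le hm _ _
    _ = specNorm (Bᵀ * P * B) + σ ^ 2 * specNorm (Bbarᵀ * P * Bbar) := by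
        rw [specNorm_smul hm, abs_of_nonneg (sq_nonneg σ)]
    _ ≤ specNorm B * specNorm P * specNorm B + σ ^ 2 * (specNorm Bbar * specNorm P * specNorm Bbar) := by
        have := mul_le_mul_of_nonneg_left h2 (sq_nonneg σ)
        linarith
    _ = alphaR σ B Bbar * specNorm P := by rw [alphaR]; ring

lemma specNorm_QF_le (hn : 0 < n) (P : Matrix (Fin n) (Fin n) ℝ) :
    specNorm (Aᵀ * P * A + σ ^ 2 • (Abarᵀ * P * Abar)) ≤ alphaA σ A Abar * specNorm P := by
  have h1 : specNorm (Aᵀ * P * A) ≤ specNorm A * specNorm P * specNorm A := by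
    have := specNorm_mul3_le hn hn hn Aᵀ P A
    rwa [specNorm_transpose hn hn] at this
  have h2 : specNorm (Abarᵀ * P * Abar) ≤ specNorm Abar * specNorm P * specNorm Abar := by
    have := specNorm_mul3_le hn hn hn Abarᵀ P Abar
    rwa [specNorm_transpose hn hn] at this
  calc specNorm (Aᵀ * P * A + σ ^ 2 • (Abarᵀ * P * Abar))
      ≤ specNorm (Aᵀ * P * A) + specNorm (σ ^ 2 • (Abarᵀ * P * Abar)) :=
        specNorm_add_le hn _ _
    _ = specNorm (Aᵀ * P * A) + σ ^ 2 * specNorm (Abarᵀ * P * Abar) := by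
        rw [specNorm_smul hn, abs_of_nonneg (sq_nonneg σ)]
    _ ≤ specNorm A * specNorm P * specNorm A + σ ^ 2 * (specNorm Abar * specNorm P * specNorm Abar) := by
        have := mul_le_mul_of_nonneg_left h2 (sq_nonneg σ)
        linarith
    _ = alphaA σ A Abar * specNorm P := by rw [alphaA]; ring


lemma prod3_le {x1 x2 x3 b1 b2 b3 : ℝ} (hx1 : 0 ≤ x1) (hx2 : 0 ≤ x2) (hx3 : 0 ≤ x3)
    (h1 : x1 ≤ b1) (h2 : x2 ≤ b2) (h3 : x3 ≤ b3) : x1 * x2 * x3 ≤ b1 * b2 * b3 := by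
  have h12 : x1 * x2 ≤ b1 * b2 := mul_le_mul h1 h2 hx2 (hx1.trans h1)
  exact mul_le_mul h12 h3 hx3 (mul_nonneg (hx1.trans h1) (hx2.trans h2))

lemma Rop_ge (hR0 : (Bᵀ * B + σ ^ 2 • (Bbarᵀ * Bbar)).PosDef) {a : ℝ}
    {P : Matrix (Fin n) (Fin n) ℝ} (ha : 0 ≤ a) (hP : P ∈ Slice a) :
    (Rop σ B Bbar P - (a * lamMin (Bᵀ * B + σ ^ 2 • (Bbarᵀ * Bbar))) •
      (1 : Matrix (Fin m) (Fin m) ℝ)).PosSemidef := by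
  set R0 : Matrix (Fin m) (Fin m) ℝ := Bᵀ * B + σ ^ 2 • (Bbarᵀ * Bbar) with hR0def
  have h1 : (Bᵀ * (P - a • (1 : Matrix (Fin n) (Fin n) ℝ)) * B).PosSemidef := by
    have := hP.2.1.conjTranspose_mul_mul_same B
    rwa [conjTranspose_eq_transpose] at this
  have h2 : (Bbarᵀ * (P - a • (1 : Matrix (Fin n) (Fin n) ℝ)) * Bbar).PosSemidef := by
    have := hP.2.1.conjTranspose_mul_mul_same Bbar
    rwa [conjTranspose_eq_transpose] at this
  have h3 : (R0 - lamMin R0 • (1 : Matrix (Fin m) (Fin m) ℝ)).PosSemidef :=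
    sub_lamMin_smul_one_psd (symm_of_herm hR0.posSemidef.1)
  have key : Rop σ B Bbar P - (a * lamMin R0) • (1 : Matrix (Fin m) (Fin m) ℝ)
      = (Bᵀ * (P - a • (1 : Matrix (Fin n) (Fin n) ℝ)) * B
          + σ ^ 2 • (Bbarᵀ * (P - a • (1 : Matrix (Fin n) (Fin n) ℝ)) * Bbar))
        + a • (R0 - lamMin R0 • (1 : Matrix (Fin m) (Fin m) ℝ)) := by
    rw [Rop, hR0def]
    simp only [Matrix.mul_sub, Matrix.sub_mul, Matrix.mul_smul, Matrix.smul_mul,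
      Matrix.mul_one, smul_sub, smul_add, smul_smul]
    module
  rw [key]
  exact ((h1.add (psd_smul (sq_nonneg σ) h2)).add (psd_smul ha h3))

lemma Rop_posdef (hm : 0 < m) (hR0 : (Bᵀ * B + σ ^ 2 • (Bbarᵀ * Bbar)).PosDef) {a : ℝ}
    {P : Matrix (Fin n) (Fin n) ℝ} (ha : 0 < a) (hP : P ∈ Slice a) :
    (Rop σ B Bbar P).PosDef := by
  have hl : 0 < a * lamMin (Bᵀ * B + σ ^ 2 • (Bbarᵀ * Bbar)) :=
    mul_pos ha (lamMin_pos hm hR0)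
  exact posDef_of_ge hl (Rop_symm σ B Bbar hP.1) (Rop_ge σ B Bbar hR0 ha.le hP)

lemma Rop_inv_norm_le (hm : 0 < m) (hR0 : (Bᵀ * B + σ ^ 2 • (Bbarᵀ * Bbar)).PosDef) {a : ℝ}
    {P : Matrix (Fin n) (Fin n) ℝ} (ha : 0 < a) (hP : P ∈ Slice a) :
    specNorm (Rop σ B Bbar P)⁻¹ ≤ cR σ B Bbar a := by
  have hl : 0 < a * lamMin (Bᵀ * B + σ ^ 2 • (Bbarᵀ * Bbar)) :=
    mul_pos ha (lamMin_pos hm hR0)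
  have := specNorm_inv_le hm hl (Rop_symm σ B Bbar hP.1) (Rop_ge σ B Bbar hR0 ha.le hP)
  rwa [cR]

lemma Rop_mul_inv (hm : 0 < m) (hR0 : (Bᵀ * B + σ ^ 2 • (Bbarᵀ * Bbar)).PosDef) {a : ℝ}
    {P : Matrix (Fin n) (Fin n) ℝ} (ha : 0 < a) (hP : P ∈ Slice a) :
    Rop σ B Bbar P * (Rop σ B Bbar P)⁻¹ = 1 :=
  Matrix.mul_nonsing_inv _ (isUnit_iff_ne_zero.mpr (Rop_posdef σ B Bbar hm hR0 ha hP).det_pos.ne')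

lemma Rop_inv_mul (hm : 0 < m) (hR0 : (Bᵀ * B + σ ^ 2 • (Bbarᵀ * Bbar)).PosDef) {a : ℝ}
    {P : Matrix (Fin n) (Fin n) ℝ} (ha : 0 < a) (hP : P ∈ Slice a) :
    (Rop σ B Bbar P)⁻¹ * Rop σ B Bbar P = 1 :=
  Matrix.nonsing_inv_mul _ (isUnit_iff_ne_zero.mpr (Rop_posdef σ B Bbar hm hR0 ha hP).det_pos.ne')

lemma Rop_inv_symm {P : Matrix (Fin n) (Fin n) ℝ} (hP : P.IsSymm) :
    ((Rop σ B Bbar P)⁻¹)ᵀ = (Rop σ B Bbar P)⁻¹ := by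
  rw [Matrix.transpose_nonsing_inv, (Rop_symm σ B Bbar hP).eq]

lemma Phi_eq_cs {P : Matrix (Fin n) (Fin n) ℝ} (hsym : P.IsSymm)
    (hR : Rop σ B Bbar P * (Rop σ B Bbar P)⁻¹ = 1)
    (hR' : (Rop σ B Bbar P)⁻¹ * Rop σ B Bbar P = 1) :
    Phi σ A Abar B Bbar P =
      (A - B * ((Rop σ B Bbar P)⁻¹ * (Sop σ A Abar B Bbar P)ᵀ))ᵀ * P
        * (A - B * ((Rop σ B Bbar P)⁻¹ * (Sop σ A Abar B Bbar P)ᵀ))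
      + σ ^ 2 • ((Abar - Bbar * ((Rop σ B Bbar P)⁻¹ * (Sop σ A Abar B Bbar P)ᵀ))ᵀ * P
        * (Abar - Bbar * ((Rop σ B Bbar P)⁻¹ * (Sop σ A Abar B Bbar P)ᵀ))) := by
  have hRT : ((Rop σ B Bbar P)⁻¹)ᵀ = (Rop σ B Bbar P)⁻¹ := Rop_inv_symm σ B Bbar hsym
  set R : Matrix (Fin m) (Fin m) ℝ := Rop σ B Bbar P with hRdef
  set S : Matrix (Fin n) (Fin m) ℝ := Sop σ A Abar B Bbar P with hSdef
  set K : Matrix (Fin m) (Fin n) ℝ := R⁻¹ * Sᵀ with hKdef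
  have e1 : (A - B * K)ᵀ * P * (A - B * K)
      = Aᵀ * P * A - Aᵀ * P * (B * K) - (B * K)ᵀ * P * A + (B * K)ᵀ * P * (B * K) := by
    simp only [Matrix.transpose_sub, Matrix.sub_mul, Matrix.mul_sub]
    abel
  have e2 : (Abar - Bbar * K)ᵀ * P * (Abar - Bbar * K)
      = Abarᵀ * P * Abar - Abarᵀ * P * (Bbar * K) - (Bbar * K)ᵀ * P * Abar
        + (Bbar * K)ᵀ * P * (Bbar * K) := by
    simp only [Matrix.transpose_sub, Matrix.sub_mul, Matrix.mul_sub]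
    abel
  have t1 : Aᵀ * P * (B * K) + σ ^ 2 • (Abarᵀ * P * (Bbar * K)) = S * K := by
    rw [hSdef, Sop]
    simp only [Matrix.add_mul, Matrix.smul_mul, Matrix.mul_assoc]
  have t2 : (B * K)ᵀ * P * A + σ ^ 2 • ((Bbar * K)ᵀ * P * Abar) = Kᵀ * Sᵀ := by
    rw [hSdef, Sop]
    simp only [Matrix.transpose_add, Matrix.transpose_smul, Matrix.transpose_mul,
      Matrix.transpose_transpose, Matrix.mul_add, Matrix.mul_smul, hsym.eq, Matrix.mul_assoc]
  have t3 : (B * K)ᵀ * P * (B * K) + σ ^ 2 • ((Bbar * K)ᵀ * P * (Bbar * K)) = Kᵀ * R * K := by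
    rw [hRdef, Rop]
    simp only [Matrix.mul_add, Matrix.add_mul, Matrix.mul_smul, Matrix.smul_mul,
      Matrix.transpose_mul, Matrix.transpose_transpose, Matrix.mul_assoc]
  have k1 : S * K = S * R⁻¹ * Sᵀ := by rw [hKdef, ← Matrix.mul_assoc]
  have k2 : Kᵀ * Sᵀ = S * R⁻¹ * Sᵀ := by
    rw [hKdef, Matrix.transpose_mul, Matrix.transpose_transpose, hRT, Matrix.mul_assoc]
  have k3 : Kᵀ * R * K = S * R⁻¹ * Sᵀ := by
    rw [hKdef, Matrix.transpose_mul, Matrix.transpose_transpose, hRT]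
    calc S * R⁻¹ * R * (R⁻¹ * Sᵀ) = S * (R⁻¹ * R) * (R⁻¹ * Sᵀ) := by
          rw [Matrix.mul_assoc S]
      _ = S * (R⁻¹ * Sᵀ) := by rw [hR', Matrix.mul_one]
      _ = S * R⁻¹ * Sᵀ := by rw [Matrix.mul_assoc]
  rw [Phi, e1, e2, ← hSdef, ← hRdef]
  have distrib : Aᵀ * P * A - Aᵀ * P * (B * K) - (B * K)ᵀ * P * A + (B * K)ᵀ * P * (B * K)
      + σ ^ 2 • (Abarᵀ * P * Abar - Abarᵀ * P * (Bbar * K) - (Bbar * K)ᵀ * P * Abar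
        + (Bbar * K)ᵀ * P * (Bbar * K))
      = (Aᵀ * P * A + σ ^ 2 • (Abarᵀ * P * Abar))
        - (Aᵀ * P * (B * K) + σ ^ 2 • (Abarᵀ * P * (Bbar * K)))
        - ((B * K)ᵀ * P * A + σ ^ 2 • ((Bbar * K)ᵀ * P * Abar))
        + ((B * K)ᵀ * P * (B * K) + σ ^ 2 • ((Bbar * K)ᵀ * P * (Bbar * K))) := by
    simp only [smul_sub, smul_add]
    abel
  rw [distrib, t1, t2, t3, k1, k2, k3]
  abel


lemma Phi_psd (hm : 0 < m) (hR0 : (Bᵀ * B + σ ^ 2 • (Bbarᵀ * Bbar)).PosDef) {a : ℝ}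
    {P : Matrix (Fin n) (Fin n) ℝ} (ha : 0 < a) (hP : P ∈ Slice a) :
    (Phi σ A Abar B Bbar P).PosSemidef := by
  have hPsd : P.PosSemidef := slice_psd ha.le hP
  rw [Phi_eq_cs σ A Abar B Bbar hP.1 (Rop_mul_inv σ B Bbar hm hR0 ha hP)
    (Rop_inv_mul σ B Bbar hm hR0 ha hP)]
  set K := (Rop σ B Bbar P)⁻¹ * (Sop σ A Abar B Bbar P)ᵀ
  have h1 : ((A - B * K)ᵀ * P * (A - B * K)).PosSemidef := by
    have := hPsd.conjTranspose_mul_mul_same (A - B * K)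
    rwa [conjTranspose_eq_transpose] at this
  have h2 : ((Abar - Bbar * K)ᵀ * P * (Abar - Bbar * K)).PosSemidef := by
    have := hPsd.conjTranspose_mul_mul_same (Abar - Bbar * K)
    rwa [conjTranspose_eq_transpose] at this
  exact h1.add (psd_smul (sq_nonneg σ) h2)

lemma Phi_symm (hm : 0 < m) (hR0 : (Bᵀ * B + σ ^ 2 • (Bbarᵀ * Bbar)).PosDef) {a : ℝ}
    {P : Matrix (Fin n) (Fin n) ℝ} (ha : 0 < a) (hP : P ∈ Slice a) :
    (Phi σ A Abar B Bbar P).IsSymm :=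
  symm_of_herm (Phi_psd σ A Abar B Bbar hm hR0 ha hP).1

lemma SRS_norm_le (hn : 0 < n) (hm : 0 < m)
    (hR0 : (Bᵀ * B + σ ^ 2 • (Bbarᵀ * Bbar)).PosDef) {a : ℝ}
    {P : Matrix (Fin n) (Fin n) ℝ} (ha : 0 < a) (hP : P ∈ Slice a) :
    specNorm (Sop σ A Abar B Bbar P * (Rop σ B Bbar P)⁻¹ * (Sop σ A Abar B Bbar P)ᵀ)
      ≤ alphaS σ A Abar B Bbar * cR σ B Bbar a * alphaS σ A Abar B Bbar := by
  have hS : specNorm (Sop σ A Abar B Bbar P) ≤ alphaS σ A Abar B Bbar := by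
    have h1 := specNorm_Sop_le σ A Abar B Bbar hn hm P
    have h2 := slice_norm_le_one hn ha.le hP
    have h3 : 0 ≤ alphaS σ A Abar B Bbar := by
      rw [alphaS]
      exact add_nonneg (mul_nonneg (specNorm_nonneg _) (specNorm_nonneg _))
        (mul_nonneg (mul_nonneg (sq_nonneg σ) (specNorm_nonneg _)) (specNorm_nonneg _))
    nlinarith [specNorm_nonneg (Sop σ A Abar B Bbar P)]
  have hST : specNorm (Sop σ A Abar B Bbar P)ᵀ ≤ alphaS σ A Abar B Bbar := by
    rwa [specNorm_transpose hn hm]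
  have hRinv := Rop_inv_norm_le σ B Bbar hm hR0 ha hP
  calc specNorm (Sop σ A Abar B Bbar P * (Rop σ B Bbar P)⁻¹ * (Sop σ A Abar B Bbar P)ᵀ)
      ≤ specNorm (Sop σ A Abar B Bbar P) * specNorm (Rop σ B Bbar P)⁻¹
          * specNorm (Sop σ A Abar B Bbar P)ᵀ := specNorm_mul3_le hm hm hn _ _ _
    _ ≤ alphaS σ A Abar B Bbar * cR σ B Bbar a * alphaS σ A Abar B Bbar :=
        prod3_le (specNorm_nonneg _) (specNorm_nonneg _) (specNorm_nonneg _) hS hRinv hST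

lemma specNorm_Phi_le (hn : 0 < n) (hm : 0 < m)
    (hR0 : (Bᵀ * B + σ ^ 2 • (Bbarᵀ * Bbar)).PosDef) {a : ℝ}
    {P : Matrix (Fin n) (Fin n) ℝ} (ha : 0 < a) (hP : P ∈ Slice a) :
    specNorm (Phi σ A Abar B Bbar P) ≤ CPhi σ A Abar B Bbar a := by
  have h1 : specNorm (Aᵀ * P * A + σ ^ 2 • (Abarᵀ * P * Abar)) ≤ alphaA σ A Abar := by
    have := specNorm_QF_le σ A Abar hn P
    have h2 := slice_norm_le_one hn ha.le hP
    have h3 : 0 ≤ alphaA σ A Abar := by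
      rw [alphaA]
      exact add_nonneg (sq_nonneg _) (mul_nonneg (sq_nonneg σ) (sq_nonneg _))
    nlinarith [specNorm_nonneg (Aᵀ * P * A + σ ^ 2 • (Abarᵀ * P * Abar))]
  have h2 := SRS_norm_le σ A Abar B Bbar hn hm hR0 ha hP
  calc specNorm (Phi σ A Abar B Bbar P)
      ≤ specNorm (Aᵀ * P * A + σ ^ 2 • (Abarᵀ * P * Abar))
        + specNorm (Sop σ A Abar B Bbar P * (Rop σ B Bbar P)⁻¹ * (Sop σ A Abar B Bbar P)ᵀ) := by
        rw [Phi]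
        exact specNorm_sub_le hn _ _
    _ ≤ alphaA σ A Abar + alphaS σ A Abar B Bbar * cR σ B Bbar a * alphaS σ A Abar B Bbar := by
        linarith
    _ = CPhi σ A Abar B Bbar a := by rw [CPhi]; ring

lemma trace_Phi_le (hn : 0 < n) (hm : 0 < m)
    (hR0 : (Bᵀ * B + σ ^ 2 • (Bbarᵀ * Bbar)).PosDef) {a : ℝ}
    {P : Matrix (Fin n) (Fin n) ℝ} (ha : 0 < a) (hP : P ∈ Slice a) :
    (Phi σ A Abar B Bbar P).trace ≤ CA σ A Abar := by
  have hPsd : P.PosSemidef := slice_psd ha.le hP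
  set N : Matrix (Fin n) (Fin n) ℝ := A * Aᵀ + σ ^ 2 • (Abar * Abarᵀ) with hNdef
  have hNpsd : N.PosSemidef := CA_psd σ A Abar
  -- trace of the Riccati correction is nonnegative
  have hSRS : (Sop σ A Abar B Bbar P * (Rop σ B Bbar P)⁻¹
      * (Sop σ A Abar B Bbar P)ᵀ).PosSemidef := by
    have hRinvPsd : ((Rop σ B Bbar P)⁻¹).PosSemidef :=
      (Rop_posdef σ B Bbar hm hR0 ha hP).inv.posSemidef
    have := hRinvPsd.mul_mul_conjTranspose_same (Sop σ A Abar B Bbar P)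
    rwa [conjTranspose_eq_transpose] at this
  have htr1 : (Phi σ A Abar B Bbar P).trace
      ≤ (Aᵀ * P * A + σ ^ 2 • (Abarᵀ * P * Abar)).trace := by
    rw [Phi, Matrix.trace_sub]
    have := trace_nonneg_of_psd hSRS
    linarith
  have htr2 : (Aᵀ * P * A + σ ^ 2 • (Abarᵀ * P * Abar)).trace = (P * N).trace := by
    rw [Matrix.trace_add, Matrix.trace_smul, hNdef, Matrix.mul_add, Matrix.trace_add,
      Matrix.mul_smul, Matrix.trace_smul]
    congr 1
    · rw [Matrix.mul_assoc, Matrix.trace_mul_comm, Matrix.mul_assoc]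
    · rw [Matrix.mul_assoc, Matrix.trace_mul_comm (Abarᵀ) (P * Abar), Matrix.mul_assoc]
  have htr3 : (P * N).trace ≤ CA σ A Abar := by
    have hkey : (0:ℝ) ≤ (P * (CA σ A Abar • (1 : Matrix (Fin n) (Fin n) ℝ) - N)).trace := by
      refine trace_mul_nonneg hPsd ?_
      rw [CA]
      exact lamMax_smul_one_sub_psd (symm_of_herm hNpsd.1)
    rw [Matrix.mul_sub, Matrix.trace_sub, Matrix.mul_smul, Matrix.mul_one,
      Matrix.trace_smul] at hkey
    have : (CA σ A Abar • P.trace : ℝ) = CA σ A Abar := by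
      rw [smul_eq_mul, hP.2.2, mul_one]
    linarith [hkey, this.symm.le]
  linarith

set_option maxHeartbeats 2000000 in
lemma Phi_lip (hn : 0 < n) (hm : 0 < m)
    (hR0 : (Bᵀ * B + σ ^ 2 • (Bbarᵀ * Bbar)).PosDef) {a : ℝ} (ha : 0 < a)
    {P Q : Matrix (Fin n) (Fin n) ℝ} (hP : P ∈ Slice a) (hQ : Q ∈ Slice a) :
    specNorm (Phi σ A Abar B Bbar P - Phi σ A Abar B Bbar Q)
      ≤ LPhi σ A Abar B Bbar a * specNorm (P - Q) := by
  set H : Matrix (Fin n) (Fin n) ℝ := P - Q with hHdef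
  set SP := Sop σ A Abar B Bbar P with hSP
  set SQ := Sop σ A Abar B Bbar Q with hSQ
  set RPi := (Rop σ B Bbar P)⁻¹ with hRPi
  set RQi := (Rop σ B Bbar Q)⁻¹ with hRQi
  set DS := Sop σ A Abar B Bbar H with hDS
  set DR := Rop σ B Bbar H with hDR
  have hRP1 : ∀ X : Matrix (Fin m) (Fin n) ℝ, Rop σ B Bbar P * (RPi * X) = X := by
    intro X
    rw [← Matrix.mul_assoc, Rop_mul_inv σ B Bbar hm hR0 ha hP, Matrix.one_mul]
  have hRQ1 : ∀ X : Matrix (Fin m) (Fin n) ℝ, RQi * (Rop σ B Bbar Q * X) = X := by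
    intro X
    rw [← Matrix.mul_assoc, Rop_inv_mul σ B Bbar hm hR0 ha hQ, Matrix.one_mul]
  have key : SQ * RQi * DR * RPi * SPᵀ = SQ * (RQi * SPᵀ) - SQ * (RPi * SPᵀ) := by
    rw [hDR, ← Rop_linear σ B Bbar P Q]
    simp only [Matrix.mul_sub, Matrix.sub_mul, Matrix.mul_assoc]
    rw [hRP1, hRQ1]
  have iden : Phi σ A Abar B Bbar P - Phi σ A Abar B Bbar Q
      = (Aᵀ * H * A + σ ^ 2 • (Abarᵀ * H * Abar))
        - DS * RPi * SPᵀ - SQ * RQi * DSᵀ + SQ * RQi * DR * RPi * SPᵀ := by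
    have hQF : (Aᵀ * P * A + σ ^ 2 • (Abarᵀ * P * Abar))
        - (Aᵀ * Q * A + σ ^ 2 • (Abarᵀ * Q * Abar))
        = Aᵀ * H * A + σ ^ 2 • (Abarᵀ * H * Abar) := by
      rw [hHdef]
      simp only [Matrix.mul_sub, Matrix.sub_mul, smul_sub]
      abel
    have hDSe : DS = SP - SQ := by rw [hDS, hSP, hSQ, Sop_linear σ A Abar B Bbar P Q, hHdef]
    have e1 : DS * RPi * SPᵀ = SP * RPi * SPᵀ - SQ * RPi * SPᵀ := by
      rw [hDSe]
      simp only [Matrix.sub_mul]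
    have e2 : SQ * RQi * DSᵀ = SQ * RQi * SPᵀ - SQ * RQi * SQᵀ := by
      rw [hDSe]
      simp only [Matrix.transpose_sub, Matrix.mul_sub]
    rw [Phi, Phi, ← hSP, ← hSQ, ← hRPi, ← hRQi, e1, e2, key, ← hQF]
    simp only [Matrix.mul_assoc]
    abel
  -- numeric bounds
  set aA := alphaA σ A Abar with haA
  set aS := alphaS σ A Abar B Bbar with haS
  set aR := alphaR σ B Bbar with haR
  set c := cR σ B Bbar a with hc
  set h := specNorm H with hh
  have hhnn : 0 ≤ h := specNorm_nonneg _
  have haAnn : 0 ≤ aA := by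
    rw [haA, alphaA]
    exact add_nonneg (sq_nonneg _) (mul_nonneg (sq_nonneg σ) (sq_nonneg _))
  have haSnn : 0 ≤ aS := by
    rw [haS, alphaS]
    exact add_nonneg (mul_nonneg (specNorm_nonneg _) (specNorm_nonneg _))
      (mul_nonneg (mul_nonneg (sq_nonneg σ) (specNorm_nonneg _)) (specNorm_nonneg _))
  have haRnn : 0 ≤ aR := by
    rw [haR, alphaR]
    exact add_nonneg (sq_nonneg _) (mul_nonneg (sq_nonneg σ) (sq_nonneg _))
  have hcnn : 0 ≤ c := by
    rw [hc, cR]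
    exact le_of_lt (div_pos one_pos (mul_pos ha (lamMin_pos hm hR0)))
  have hSPle : specNorm SP ≤ aS := by
    have h1 := specNorm_Sop_le σ A Abar B Bbar hn hm P
    have h2 := slice_norm_le_one hn ha.le hP
    rw [← hSP, ← haS] at h1
    calc specNorm SP ≤ aS * specNorm P := h1
      _ ≤ aS * 1 := mul_le_mul_of_nonneg_left h2 haSnn
      _ = aS := mul_one _
  have hSQle : specNorm SQ ≤ aS := by
    have h1 := specNorm_Sop_le σ A Abar B Bbar hn hm Q
    have h2 := slice_norm_le_one hn ha.le hQ
    rw [← hSQ, ← haS] at h1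
    calc specNorm SQ ≤ aS * specNorm Q := h1
      _ ≤ aS * 1 := mul_le_mul_of_nonneg_left h2 haSnn
      _ = aS := mul_one _
  have hSPTle : specNorm SPᵀ ≤ aS := by rwa [specNorm_transpose hn hm]
  have hSQTle : specNorm SQᵀ ≤ aS := by
    have := hSQle
    rwa [← specNorm_transpose hn hm] at this
  have hDSle : specNorm DS ≤ aS * h := by
    have := specNorm_Sop_le σ A Abar B Bbar hn hm H
    rw [← hDS, ← haS, ← hh] at this
    exact this
  have hDSTle : specNorm DSᵀ ≤ aS * h := by rwa [specNorm_transpose hn hm]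
  have hDRle : specNorm DR ≤ aR * h := by
    have := specNorm_Rop_le σ B Bbar hn hm H
    rw [← hDR, ← haR, ← hh] at this
    exact this
  have hRPile : specNorm RPi ≤ c := by
    have := Rop_inv_norm_le σ B Bbar hm hR0 ha hP
    rw [← hRPi, ← hc] at this
    exact this
  have hRQile : specNorm RQi ≤ c := by
    have := Rop_inv_norm_le σ B Bbar hm hR0 ha hQ
    rw [← hRQi, ← hc] at this
    exact this
  have t1 : specNorm (Aᵀ * H * A + σ ^ 2 • (Abarᵀ * H * Abar)) ≤ aA * h := by
    have := specNorm_QF_le σ A Abar hn H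
    rw [← haA, ← hh] at this
    exact this
  have t2 : specNorm (DS * RPi * SPᵀ) ≤ (aS * h) * c * aS := by
    calc specNorm (DS * RPi * SPᵀ) ≤ specNorm DS * specNorm RPi * specNorm SPᵀ :=
          specNorm_mul3_le hm hm hn _ _ _
      _ ≤ (aS * h) * c * aS := prod3_le (specNorm_nonneg _) (specNorm_nonneg _)
          (specNorm_nonneg _) hDSle hRPile hSPTle
  have t3 : specNorm (SQ * RQi * DSᵀ) ≤ aS * c * (aS * h) := by
    calc specNorm (SQ * RQi * DSᵀ) ≤ specNorm SQ * specNorm RQi * specNorm DSᵀ :=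
          specNorm_mul3_le hm hm hn _ _ _
      _ ≤ aS * c * (aS * h) := prod3_le (specNorm_nonneg _) (specNorm_nonneg _)
          (specNorm_nonneg _) hSQle hRQile hDSTle
  have t4 : specNorm (SQ * RQi * DR * RPi * SPᵀ) ≤ (aS * c * (aR * h)) * c * aS := by
    have hX : specNorm (SQ * RQi * DR) ≤ aS * c * (aR * h) := by
      calc specNorm (SQ * RQi * DR) ≤ specNorm SQ * specNorm RQi * specNorm DR :=
            specNorm_mul3_le hm hm hm _ _ _
        _ ≤ aS * c * (aR * h) := prod3_le (specNorm_nonneg _) (specNorm_nonneg _)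
            (specNorm_nonneg _) hSQle hRQile hDRle
    calc specNorm (SQ * RQi * DR * RPi * SPᵀ)
        ≤ specNorm (SQ * RQi * DR) * specNorm RPi * specNorm SPᵀ :=
          specNorm_mul3_le hm hm hn _ _ _
      _ ≤ (aS * c * (aR * h)) * c * aS := prod3_le (specNorm_nonneg _) (specNorm_nonneg _)
          (specNorm_nonneg _) hX hRPile hSPTle
  calc specNorm (Phi σ A Abar B Bbar P - Phi σ A Abar B Bbar Q)
      = specNorm ((Aᵀ * H * A + σ ^ 2 • (Abarᵀ * H * Abar))
          - DS * RPi * SPᵀ - SQ * RQi * DSᵀ + SQ * RQi * DR * RPi * SPᵀ) := by rw [iden]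
    _ ≤ specNorm ((Aᵀ * H * A + σ ^ 2 • (Abarᵀ * H * Abar))
          - DS * RPi * SPᵀ - SQ * RQi * DSᵀ) + specNorm (SQ * RQi * DR * RPi * SPᵀ) :=
        specNorm_add_le hn _ _
    _ ≤ specNorm ((Aᵀ * H * A + σ ^ 2 • (Abarᵀ * H * Abar)) - DS * RPi * SPᵀ)
          + specNorm (SQ * RQi * DSᵀ) + specNorm (SQ * RQi * DR * RPi * SPᵀ) := by
        have := specNorm_sub_le hn ((Aᵀ * H * A + σ ^ 2 • (Abarᵀ * H * Abar))
          - DS * RPi * SPᵀ) (SQ * RQi * DSᵀ)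
        linarith
    _ ≤ specNorm (Aᵀ * H * A + σ ^ 2 • (Abarᵀ * H * Abar)) + specNorm (DS * RPi * SPᵀ)
          + specNorm (SQ * RQi * DSᵀ) + specNorm (SQ * RQi * DR * RPi * SPᵀ) := by
        have := specNorm_sub_le hn (Aᵀ * H * A + σ ^ 2 • (Abarᵀ * H * Abar)) (DS * RPi * SPᵀ)
        linarith
    _ ≤ aA * h + (aS * h) * c * aS + aS * c * (aS * h) + (aS * c * (aR * h)) * c * aS := by
        linarith
    _ = LPhi σ A Abar B Bbar a * h := by rw [LPhi, ← haA, ← haS, ← haR, ← hc]; ring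


lemma LPhi_nonneg (hm : 0 < m) (hR0 : (Bᵀ * B + σ ^ 2 • (Bbarᵀ * Bbar)).PosDef)
    {a : ℝ} (ha : 0 < a) : 0 ≤ LPhi σ A Abar B Bbar a := by
  have hc : 0 ≤ cR σ B Bbar a := by
    rw [cR]
    exact le_of_lt (div_pos one_pos (mul_pos ha (lamMin_pos hm hR0)))
  have h1 : 0 ≤ alphaA σ A Abar := by
    rw [alphaA]
    exact add_nonneg (sq_nonneg _) (mul_nonneg (sq_nonneg σ) (sq_nonneg _))
  have h2 : 0 ≤ alphaS σ A Abar B Bbar := by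
    rw [alphaS]
    exact add_nonneg (mul_nonneg (specNorm_nonneg _) (specNorm_nonneg _))
      (mul_nonneg (mul_nonneg (sq_nonneg σ) (specNorm_nonneg _)) (specNorm_nonneg _))
  have h3 : 0 ≤ alphaR σ B Bbar := by
    rw [alphaR]
    exact add_nonneg (sq_nonneg _) (mul_nonneg (sq_nonneg σ) (sq_nonneg _))
  rw [LPhi]
  have t1 : 0 ≤ 2 * alphaS σ A Abar B Bbar ^ 2 * cR σ B Bbar a :=
    mul_nonneg (mul_nonneg (by norm_num) (sq_nonneg _)) hc
  have t2 : 0 ≤ alphaS σ A Abar B Bbar ^ 2 * alphaR σ B Bbar * cR σ B Bbar a ^ 2 :=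
    mul_nonneg (mul_nonneg (sq_nonneg _) h3) (sq_nonneg _)
  linarith

lemma CPhi_nonneg (hm : 0 < m) (hR0 : (Bᵀ * B + σ ^ 2 • (Bbarᵀ * Bbar)).PosDef)
    {a : ℝ} (ha : 0 < a) : 0 ≤ CPhi σ A Abar B Bbar a := by
  have hc : 0 ≤ cR σ B Bbar a := by
    rw [cR]
    exact le_of_lt (div_pos one_pos (mul_pos ha (lamMin_pos hm hR0)))
  have h1 : 0 ≤ alphaA σ A Abar := by
    rw [alphaA]
    exact add_nonneg (sq_nonneg _) (mul_nonneg (sq_nonneg σ) (sq_nonneg _))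
  rw [CPhi]
  have t1 : 0 ≤ alphaS σ A Abar B Bbar ^ 2 * cR σ B Bbar a :=
    mul_nonneg (sq_nonneg _) hc
  linarith

lemma sTau_bounds (hn : 0 < n) (hm : 0 < m)
    (hR0 : (Bᵀ * B + σ ^ 2 • (Bbarᵀ * Bbar)).PosDef) {τ : ℝ} (hτ : τ ∈ Set.Ioo (0:ℝ) 1)
    {P : Matrix (Fin n) (Fin n) ℝ} (hP : P ∈ Slice (deltaTau σ A Abar τ)) :
    τ ≤ Matrix.trace ((1 - τ) • Phi σ A Abar B Bbar P
        + (τ / (n : ℝ)) • (1 : Matrix (Fin n) (Fin n) ℝ))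
    ∧ Matrix.trace ((1 - τ) • Phi σ A Abar B Bbar P
        + (τ / (n : ℝ)) • (1 : Matrix (Fin n) (Fin n) ℝ)) ≤ (1 - τ) * CA σ A Abar + τ := by
  have hδ : 0 < deltaTau σ A Abar τ := deltaTau_pos hn σ A Abar hτ
  have hnne : ((n : ℝ)) ≠ 0 := by exact_mod_cast hn.ne'
  have htr : Matrix.trace ((1 - τ) • Phi σ A Abar B Bbar P
      + (τ / (n : ℝ)) • (1 : Matrix (Fin n) (Fin n) ℝ))
      = (1 - τ) * (Phi σ A Abar B Bbar P).trace + τ := by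
    rw [Matrix.trace_add, Matrix.trace_smul, Matrix.trace_smul, Matrix.trace_one,
      smul_eq_mul, smul_eq_mul, Fintype.card_fin]
    field_simp
  have h1 : 0 ≤ (Phi σ A Abar B Bbar P).trace :=
    trace_nonneg_of_psd (Phi_psd σ A Abar B Bbar hm hR0 hδ hP)
  have h2 : (Phi σ A Abar B Bbar P).trace ≤ CA σ A Abar :=
    trace_Phi_le σ A Abar B Bbar hn hm hR0 hδ hP
  rw [htr]
  constructor
  · nlinarith [hτ.2]
  · nlinarith [hτ.2]

lemma specNorm_neg {p' q' : ℕ} (hq : 0 < q') (M : Matrix (Fin p') (Fin q') ℝ) :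
    specNorm (-M) = specNorm M := by
  rw [← neg_one_smul ℝ M, specNorm_smul hq]
  simp

lemma PhiHat_lip (hn : 0 < n) (hm : 0 < m)
    (hR0 : (Bᵀ * B + σ ^ 2 • (Bbarᵀ * Bbar)).PosDef) {τ : ℝ} (hτ : τ ∈ Set.Ioo (0:ℝ) 1)
    {P Q : Matrix (Fin n) (Fin n) ℝ} (hP : P ∈ Slice (deltaTau σ A Abar τ))
    (hQ : Q ∈ Slice (deltaTau σ A Abar τ)) :
    specNorm (PhiHat σ A Abar B Bbar τ P - PhiHat σ A Abar B Bbar τ Q)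
      ≤ LambdaTau σ A Abar B Bbar τ * specNorm (P - Q) := by
  have hδ : 0 < deltaTau σ A Abar τ := deltaTau_pos hn σ A Abar hτ
  set δ := deltaTau σ A Abar τ with hδdef
  set GP : Matrix (Fin n) (Fin n) ℝ := (1 - τ) • Phi σ A Abar B Bbar P
    + (τ / (n : ℝ)) • (1 : Matrix (Fin n) (Fin n) ℝ) with hGP
  set GQ : Matrix (Fin n) (Fin n) ℝ := (1 - τ) • Phi σ A Abar B Bbar Q
    + (τ / (n : ℝ)) • (1 : Matrix (Fin n) (Fin n) ℝ) with hGQ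
  set sP := GP.trace with hsP
  set sQ := GQ.trace with hsQ
  obtain ⟨hsPl, hsPu⟩ := sTau_bounds σ A Abar B Bbar hn hm hR0 hτ hP
  obtain ⟨hsQl, hsQu⟩ := sTau_bounds σ A Abar B Bbar hn hm hR0 hτ hQ
  rw [← hGP, ← hsP] at hsPl hsPu
  rw [← hGQ, ← hsQ] at hsQl hsQu
  have hsPpos : 0 < sP := lt_of_lt_of_le hτ.1 hsPl
  have hsQpos : 0 < sQ := lt_of_lt_of_le hτ.1 hsQl
  have hPhiHatP : PhiHat σ A Abar B Bbar τ P = sP⁻¹ • GP := rfl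
  have hPhiHatQ : PhiHat σ A Abar B Bbar τ Q = sQ⁻¹ • GQ := rfl
  have hsPne : sP ≠ 0 := hsPpos.ne'
  have hsQne : sQ ≠ 0 := hsQpos.ne'
  have iden : sP⁻¹ • GP - sQ⁻¹ • GQ
      = sP⁻¹ • (GP - GQ) + ((sQ - sP) * (sP⁻¹ * sQ⁻¹)) • GQ := by
    match_scalars <;> field_simp <;> ring
  have hGdiff : GP - GQ = (1 - τ) • (Phi σ A Abar B Bbar P - Phi σ A Abar B Bbar Q) := by
    rw [hGP, hGQ, smul_sub]
    abel
  set L := LPhi σ A Abar B Bbar δ with hL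
  set Cp := CPhi σ A Abar B Bbar δ with hCp
  set h := specNorm (P - Q) with hh
  have hLnn : 0 ≤ L := LPhi_nonneg σ A Abar B Bbar hm hR0 hδ
  have hCpnn : 0 ≤ Cp := CPhi_nonneg σ A Abar B Bbar hm hR0 hδ
  have hhnn : 0 ≤ h := specNorm_nonneg _
  have hτ1 : (0:ℝ) < 1 - τ := by linarith [hτ.2]
  have hPhiLip : specNorm (Phi σ A Abar B Bbar P - Phi σ A Abar B Bbar Q) ≤ L * h := by
    rw [hL, hh]
    exact Phi_lip σ A Abar B Bbar hn hm hR0 hδ hP hQ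
  -- term 1 bound
  have hterm1 : specNorm (sP⁻¹ • (GP - GQ)) ≤ τ⁻¹ * ((1 - τ) * (L * h)) := by
    rw [hGdiff, specNorm_smul hn, specNorm_smul hn, abs_of_nonneg (inv_nonneg.mpr hsPpos.le),
      abs_of_nonneg hτ1.le]
    have hm1 : sP⁻¹ ≤ τ⁻¹ := inv_anti₀ hτ.1 hsPl
    have hm2 : (1 - τ) * specNorm (Phi σ A Abar B Bbar P - Phi σ A Abar B Bbar Q)
        ≤ (1 - τ) * (L * h) := mul_le_mul_of_nonneg_left hPhiLip hτ1.le
    have hnn : 0 ≤ (1 - τ) * specNorm (Phi σ A Abar B Bbar P - Phi σ A Abar B Bbar Q) :=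
      mul_nonneg hτ1.le (specNorm_nonneg _)
    exact mul_le_mul hm1 hm2 hnn (inv_nonneg.mpr (le_of_lt hτ.1))
  -- term 2 bound
  have hGQnorm : specNorm GQ ≤ (1 - τ) * Cp + τ / (n : ℝ) := by
    have hnpos : (0:ℝ) < (n:ℝ) := by exact_mod_cast hn
    have h1 : specNorm ((1 - τ) • Phi σ A Abar B Bbar Q) ≤ (1 - τ) * Cp := by
      rw [specNorm_smul hn, abs_of_nonneg hτ1.le]
      exact mul_le_mul_of_nonneg_left
        (specNorm_Phi_le σ A Abar B Bbar hn hm hR0 hδ hQ) hτ1.le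
    have h2 : specNorm ((τ / (n : ℝ)) • (1 : Matrix (Fin n) (Fin n) ℝ)) ≤ τ / (n : ℝ) := by
      rw [specNorm_smul hn, abs_of_nonneg (div_nonneg hτ.1.le (Nat.cast_nonneg n))]
      have h1n := specNorm_one_le hn
      nlinarith [specNorm_nonneg (1 : Matrix (Fin n) (Fin n) ℝ),
        div_nonneg hτ.1.le (Nat.cast_nonneg n)]
    calc specNorm GQ ≤ specNorm ((1 - τ) • Phi σ A Abar B Bbar Q)
          + specNorm ((τ / (n : ℝ)) • (1 : Matrix (Fin n) (Fin n) ℝ)) := by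
          rw [hGQ]; exact specNorm_add_le hn _ _
      _ ≤ (1 - τ) * Cp + τ / (n : ℝ) := add_le_add h1 h2
  have htrdiff : |sQ - sP| ≤ (1 - τ) * ((n : ℝ) * (L * h)) := by
    have hd : sQ - sP = (1 - τ) * (Phi σ A Abar B Bbar Q - Phi σ A Abar B Bbar P).trace := by
      rw [hsP, hsQ, hGP, hGQ, Matrix.trace_add, Matrix.trace_add, Matrix.trace_smul,
        Matrix.trace_smul, Matrix.trace_sub]
      simp [smul_eq_mul]
      ring
    have habs : |(Phi σ A Abar B Bbar Q - Phi σ A Abar B Bbar P).trace|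
        ≤ (n : ℝ) * (L * h) := by
      have h1 := abs_trace_le hn (Phi σ A Abar B Bbar Q - Phi σ A Abar B Bbar P)
      have h2 : specNorm (Phi σ A Abar B Bbar Q - Phi σ A Abar B Bbar P) ≤ L * h := by
        have : Phi σ A Abar B Bbar Q - Phi σ A Abar B Bbar P
            = -(Phi σ A Abar B Bbar P - Phi σ A Abar B Bbar Q) := by abel
        rw [this, specNorm_neg hn]
        exact hPhiLip
      have hnpos : (0:ℝ) ≤ (n:ℝ) := by positivity
      nlinarith
    rw [hd, abs_mul, abs_of_nonneg hτ1.le]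
    exact mul_le_mul_of_nonneg_left habs hτ1.le
  have hterm2 : specNorm (((sQ - sP) * (sP⁻¹ * sQ⁻¹)) • GQ)
      ≤ ((1 - τ) * ((n : ℝ) * (L * h))) * (τ⁻¹ * τ⁻¹) * ((1 - τ) * Cp + τ / (n : ℝ)) := by
    rw [specNorm_smul hn, abs_mul, abs_mul, abs_of_nonneg (inv_nonneg.mpr hsPpos.le),
      abs_of_nonneg (inv_nonneg.mpr hsQpos.le)]
    refine prod3_le (abs_nonneg _)
      (mul_nonneg (inv_nonneg.mpr hsPpos.le) (inv_nonneg.mpr hsQpos.le))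
      (specNorm_nonneg _) htrdiff ?_ hGQnorm
    exact mul_le_mul (inv_anti₀ hτ.1 hsPl) (inv_anti₀ hτ.1 hsQl)
      (inv_nonneg.mpr hsQpos.le) (inv_nonneg.mpr (le_of_lt hτ.1))
  calc specNorm (PhiHat σ A Abar B Bbar τ P - PhiHat σ A Abar B Bbar τ Q)
      = specNorm (sP⁻¹ • (GP - GQ) + ((sQ - sP) * (sP⁻¹ * sQ⁻¹)) • GQ) := by
        rw [hPhiHatP, hPhiHatQ, iden]
    _ ≤ specNorm (sP⁻¹ • (GP - GQ)) + specNorm (((sQ - sP) * (sP⁻¹ * sQ⁻¹)) • GQ) :=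
        specNorm_add_le hn _ _
    _ ≤ τ⁻¹ * ((1 - τ) * (L * h))
        + ((1 - τ) * ((n : ℝ) * (L * h))) * (τ⁻¹ * τ⁻¹) * ((1 - τ) * Cp + τ / (n : ℝ)) := by
        linarith
    _ = LambdaTau σ A Abar B Bbar τ * h := by
        rw [LambdaTau, ← hδdef, ← hL, ← hCp]
        ring

lemma PhiHat_mem (hn : 0 < n) (hm : 0 < m)
    (hR0 : (Bᵀ * B + σ ^ 2 • (Bbarᵀ * Bbar)).PosDef) {τ : ℝ} (hτ : τ ∈ Set.Ioo (0:ℝ) 1)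
    {P : Matrix (Fin n) (Fin n) ℝ} (hP : P ∈ Slice (deltaTau σ A Abar τ)) :
    PhiHat σ A Abar B Bbar τ P ∈ Slice (deltaTau σ A Abar τ) := by
  have hδ : 0 < deltaTau σ A Abar τ := deltaTau_pos hn σ A Abar hτ
  set δ := deltaTau σ A Abar τ with hδdef
  set GP : Matrix (Fin n) (Fin n) ℝ := (1 - τ) • Phi σ A Abar B Bbar P
    + (τ / (n : ℝ)) • (1 : Matrix (Fin n) (Fin n) ℝ) with hGP
  set sP := GP.trace with hsP
  obtain ⟨hsPl, hsPu⟩ := sTau_bounds σ A Abar B Bbar hn hm hR0 hτ hP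
  rw [← hGP, ← hsP] at hsPl hsPu
  have hsPpos : 0 < sP := lt_of_lt_of_le hτ.1 hsPl
  have hτ1 : (0:ℝ) < 1 - τ := by linarith [hτ.2]
  have hPhiHatP : PhiHat σ A Abar B Bbar τ P = sP⁻¹ • GP := rfl
  have hPhisymm : (Phi σ A Abar B Bbar P).IsSymm := Phi_symm σ A Abar B Bbar hm hR0 hδ hP
  have hGPsymm : GP.IsSymm := by
    rw [Matrix.IsSymm, hGP, Matrix.transpose_add, Matrix.transpose_smul, Matrix.transpose_smul,
      Matrix.transpose_one, hPhisymm.eq]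
  refine ⟨?_, ?_, ?_⟩
  · rw [hPhiHatP, Matrix.IsSymm, Matrix.transpose_smul, hGPsymm.eq]
  · have key : GP - (sP * δ) • (1 : Matrix (Fin n) (Fin n) ℝ)
        = (1 - τ) • Phi σ A Abar B Bbar P
          + (τ / (n : ℝ) - sP * δ) • (1 : Matrix (Fin n) (Fin n) ℝ) := by
      rw [hGP]
      match_scalars <;> ring
    have hcoef : 0 ≤ τ / (n : ℝ) - sP * δ := by
      have hδle : sP * δ ≤ ((1 - τ) * CA σ A Abar + τ) * δ :=
        mul_le_mul_of_nonneg_right hsPu hδ.le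
      have := deltaTau_mul hn σ A Abar hτ
      rw [← hδdef] at this
      nlinarith
    have hpsd : (GP - (sP * δ) • (1 : Matrix (Fin n) (Fin n) ℝ)).PosSemidef := by
      rw [key]
      exact (psd_smul hτ1.le (Phi_psd σ A Abar B Bbar hm hR0 hδ hP)).add
        (psd_smul_one hcoef)
    have scale : PhiHat σ A Abar B Bbar τ P - δ • (1 : Matrix (Fin n) (Fin n) ℝ)
        = sP⁻¹ • (GP - (sP * δ) • (1 : Matrix (Fin n) (Fin n) ℝ)) := by
      rw [hPhiHatP]
      have hsPne : sP ≠ 0 := hsPpos.ne'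
      match_scalars <;> field_simp <;> ring
    rw [scale]
    exact psd_smul (inv_nonneg.mpr hsPpos.le) hpsd
  · rw [hPhiHatP, Matrix.trace_smul, ← hsP, smul_eq_mul, inv_mul_cancel₀ hsPpos.ne']


lemma LambdaTau_nonneg (hn : 0 < n) (hm : 0 < m)
    (hR0 : (Bᵀ * B + σ ^ 2 • (Bbarᵀ * Bbar)).PosDef) {τ : ℝ} (hτ : τ ∈ Set.Ioo (0:ℝ) 1) :
    0 ≤ LambdaTau σ A Abar B Bbar τ := by
  have hδ : 0 < deltaTau σ A Abar τ := deltaTau_pos hn σ A Abar hτ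
  have hL := LPhi_nonneg σ A Abar B Bbar hm hR0 hδ
  have hC := CPhi_nonneg σ A Abar B Bbar hm hR0 hδ
  have hτ1 : (0:ℝ) < 1 - τ := by linarith [hτ.2]
  have hnpos : (0:ℝ) < (n:ℝ) := by exact_mod_cast hn
  rw [LambdaTau]
  have h1 : 0 ≤ (1 - τ) * LPhi σ A Abar B Bbar (deltaTau σ A Abar τ) / τ :=
    div_nonneg (mul_nonneg hτ1.le hL) hτ.1.le
  have h2 : 0 ≤ (1 - τ) * ((1 - τ) * CPhi σ A Abar B Bbar (deltaTau σ A Abar τ) + τ / (n : ℝ))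
      * (n : ℝ) * LPhi σ A Abar B Bbar (deltaTau σ A Abar τ) / τ ^ 2 := by
    have : 0 ≤ (1 - τ) * CPhi σ A Abar B Bbar (deltaTau σ A Abar τ) + τ / (n : ℝ) := by
      have := div_nonneg hτ.1.le hnpos.le
      have := mul_nonneg hτ1.le hC
      linarith
    exact div_nonneg (mul_nonneg (mul_nonneg (mul_nonneg hτ1.le this) hnpos.le) hL)
      (sq_nonneg τ)
  linarith

lemma slice_nonempty (hn : 0 < n) {τ : ℝ} (hτ : τ ∈ Set.Ioo (0:ℝ) 1) :
    ((n : ℝ)⁻¹ • (1 : Matrix (Fin n) (Fin n) ℝ)) ∈ Slice (deltaTau σ A Abar τ) := by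
  have hnpos : (0:ℝ) < (n:ℝ) := by exact_mod_cast hn
  have hCA := CA_nonneg hn σ A Abar
  have hδle : deltaTau σ A Abar τ ≤ (n : ℝ)⁻¹ := by
    rw [deltaTau]
    have hden : τ ≤ (1 - τ) * CA σ A Abar + τ := by nlinarith [hτ.2]
    have hdenpos : 0 < (1 - τ) * CA σ A Abar + τ := lt_of_lt_of_le hτ.1 hden
    calc (τ / (n : ℝ)) / ((1 - τ) * CA σ A Abar + τ) ≤ (τ / (n : ℝ)) / τ :=
          div_le_div_of_nonneg_left (div_nonneg hτ.1.le hnpos.le) hτ.1 hden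
      _ = (n : ℝ)⁻¹ := by
          rw [div_div, mul_comm, ← div_div, div_self hτ.1.ne']
          rw [one_div]
  refine ⟨?_, ?_, ?_⟩
  · rw [Matrix.IsSymm, Matrix.transpose_smul, Matrix.transpose_one]
  · have key : (n : ℝ)⁻¹ • (1 : Matrix (Fin n) (Fin n) ℝ)
        - deltaTau σ A Abar τ • (1 : Matrix (Fin n) (Fin n) ℝ)
        = ((n : ℝ)⁻¹ - deltaTau σ A Abar τ) • (1 : Matrix (Fin n) (Fin n) ℝ) := by
      rw [sub_smul]
    rw [key]
    exact psd_smul_one (by linarith)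
  · rw [Matrix.trace_smul, Matrix.trace_one, smul_eq_mul, Fintype.card_fin]
    field_simp

lemma exists_fixed_point (hn : 0 < n) (hm : 0 < m)
    (hR0 : (Bᵀ * B + σ ^ 2 • (Bbarᵀ * Bbar)).PosDef) {τ : ℝ} (hτ : τ ∈ Set.Ioo (0:ℝ) 1)
    (hΛ : LambdaTau σ A Abar B Bbar τ < 1) :
    ∃ Pfix : Matrix (Fin n) (Fin n) ℝ, Pfix ∈ Slice (deltaTau σ A Abar τ) ∧
      PhiHat σ A Abar B Bbar τ Pfix = Pfix := by
  have hδ : 0 < deltaTau σ A Abar τ := deltaTau_pos hn σ A Abar hτ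
  set δ := deltaTau σ A Abar τ with hδdef
  set Λ := LambdaTau σ A Abar B Bbar τ with hΛdef
  have hΛ0 : 0 ≤ Λ := LambdaTau_nonneg σ A Abar B Bbar hn hm hR0 hτ
  set F : Matrix (Fin n) (Fin n) ℝ → Matrix (Fin n) (Fin n) ℝ := PhiHat σ A Abar B Bbar τ
    with hF
  set Q : ℕ → Matrix (Fin n) (Fin n) ℝ := fun k => F^[k] ((n : ℝ)⁻¹ • 1) with hQ
  have hQ0 : Q 0 ∈ Slice δ := slice_nonempty σ A Abar hn hτ
  have hQsucc : ∀ k, Q (k + 1) = F (Q k) := by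
    intro k
    rw [hQ]
    exact Function.iterate_succ_apply' F k _
  have hQmem : ∀ k, Q k ∈ Slice δ := by
    intro k
    induction k with
    | zero => exact hQ0
    | succ k ih =>
        rw [hQsucc k]
        exact PhiHat_mem σ A Abar B Bbar hn hm hR0 hτ ih
  set D : ℝ := specNorm (Q 1 - Q 0) with hD
  have hstep : ∀ k, specNorm (Q (k + 1) - Q k) ≤ Λ ^ k * D := by
    intro k
    induction k with
    | zero => simp [hD]
    | succ k ih =>
        have h1 : specNorm (Q (k + 2) - Q (k + 1)) ≤ Λ * specNorm (Q (k + 1) - Q k) := by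
          have hlip := PhiHat_lip σ A Abar B Bbar hn hm hR0 hτ (hQmem (k + 1)) (hQmem k)
          rw [← hF] at hlip
          rw [← hQsucc (k + 1), ← hQsucc k] at hlip
          exact hlip
        calc specNorm (Q (k + 2) - Q (k + 1)) ≤ Λ * specNorm (Q (k + 1) - Q k) := h1
          _ ≤ Λ * (Λ ^ k * D) := mul_le_mul_of_nonneg_left ih hΛ0
          _ = Λ ^ (k + 1) * D := by ring
  have hcauchy : CauchySeq (fun k => CLMof (Q k)) := by
    refine cauchySeq_of_le_geometric Λ D hΛ (fun k => ?_)
    rw [dist_eq_norm, ← CLMof_sub, ← specNorm_eq_opNorm hn]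
    have : Q k - Q (k + 1) = -(Q (k + 1) - Q k) := by abel
    rw [this, specNorm_neg hn]
    calc specNorm (Q (k + 1) - Q k) ≤ Λ ^ k * D := hstep k
      _ = D * Λ ^ k := by ring
  obtain ⟨T, hT⟩ := cauchySeq_tendsto_of_complete hcauchy
  set E := (Matrix.toEuclideanLin (𝕜 := ℝ) (m := Fin n) (n := Fin n)).trans
    LinearMap.toContinuousLinearMap with hE
  set Pfix : Matrix (Fin n) (Fin n) ℝ := E.symm T with hPfix
  have hCLM : CLMof Pfix = T := by
    have : CLMof Pfix = E Pfix := rfl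
    rw [this, hPfix, LinearEquiv.apply_symm_apply]
  have hconv : Filter.Tendsto (fun k => specNorm (Q k - Pfix)) Filter.atTop (nhds 0) := by
    have h0 := tendsto_iff_dist_tendsto_zero.mp hT
    have heq : ∀ k, dist (CLMof (Q k)) T = specNorm (Q k - Pfix) := by
      intro k
      rw [dist_eq_norm, ← hCLM, ← CLMof_sub, ← specNorm_eq_opNorm hn]
    simpa [heq] using h0
  have hentry : ∀ i j, Filter.Tendsto (fun k => Q k i j) Filter.atTop (nhds (Pfix i j)) := by
    intro i j
    have hb : ∀ k, |Q k i j - Pfix i j| ≤ specNorm (Q k - Pfix) := by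
      intro k
      have := abs_entry_le_specNorm hn (Q k - Pfix) i j
      simpa [Matrix.sub_apply] using this
    have habs : Filter.Tendsto (fun k => |Q k i j - Pfix i j|) Filter.atTop (nhds 0) :=
      squeeze_zero (fun k => abs_nonneg _) hb hconv
    rw [tendsto_iff_dist_tendsto_zero]
    simpa [Real.dist_eq] using habs
  have hsymm : Pfix.IsSymm := by
    rw [Matrix.IsSymm]
    ext i j
    rw [Matrix.transpose_apply]
    have h1 : Filter.Tendsto (fun k => Q k j i) Filter.atTop (nhds (Pfix j i)) := hentry j i
    have h2 : Filter.Tendsto (fun k => Q k j i) Filter.atTop (nhds (Pfix i j)) := by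
      have : ∀ k, Q k j i = Q k i j := by
        intro k
        have := (hQmem k).1
        rw [Matrix.IsSymm] at this
        calc Q k j i = (Q k)ᵀ i j := rfl
          _ = Q k i j := by rw [this]
      simpa [this] using hentry i j
    exact tendsto_nhds_unique h1 h2
  have hquad : ∀ x : Fin n → ℝ, Filter.Tendsto (fun k => x ⬝ᵥ (Q k).mulVec x)
      Filter.atTop (nhds (x ⬝ᵥ Pfix.mulVec x)) := by
    intro x
    simp only [dotProduct, Matrix.mulVec]
    refine tendsto_finset_sum _ (fun i _ => ?_)
    refine Filter.Tendsto.const_mul (x i) ?_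
    exact tendsto_finset_sum _ (fun j _ => (hentry i j).mul_const (x j))
  have hmem : Pfix ∈ Slice δ := by
    refine ⟨hsymm, ?_, ?_⟩
    · refine posSemidef_of_forall ?_ (fun x => ?_)
      · rw [Matrix.IsSymm, Matrix.transpose_sub, Matrix.transpose_smul, Matrix.transpose_one,
          hsymm.eq]
      · have hexp : ∀ M : Matrix (Fin n) (Fin n) ℝ,
            x ⬝ᵥ (M - δ • (1 : Matrix (Fin n) (Fin n) ℝ)).mulVec x
              = x ⬝ᵥ M.mulVec x - δ * (x ⬝ᵥ x) := by
          intro M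
          rw [Matrix.sub_mulVec, dotProduct_sub, Matrix.smul_mulVec, Matrix.one_mulVec,
            dotProduct_smul, smul_eq_mul]
        rw [hexp]
        have hk : ∀ k, 0 ≤ x ⬝ᵥ (Q k).mulVec x - δ * (x ⬝ᵥ x) := by
          intro k
          have := psd_dot (hQmem k).2.1 x
          rw [hexp] at this
          exact this
        have htend : Filter.Tendsto (fun k => x ⬝ᵥ (Q k).mulVec x - δ * (x ⬝ᵥ x))
            Filter.atTop (nhds (x ⬝ᵥ Pfix.mulVec x - δ * (x ⬝ᵥ x))) :=
          (hquad x).sub tendsto_const_nhds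
        exact ge_of_tendsto' htend hk
    · have htr : Filter.Tendsto (fun k => (Q k).trace) Filter.atTop (nhds Pfix.trace) := by
        simp only [Matrix.trace, Matrix.diag]
        exact tendsto_finset_sum _ (fun i _ => hentry i i)
      have h1 : Filter.Tendsto (fun _ : ℕ => (1:ℝ)) Filter.atTop (nhds 1) := tendsto_const_nhds
      have heq : (fun k => (Q k).trace) = fun _ : ℕ => (1:ℝ) := by
        funext k
        exact (hQmem k).2.2
      rw [heq] at htr
      exact tendsto_nhds_unique htr h1
  refine ⟨Pfix, hmem, ?_⟩
  have hbound : ∀ k, specNorm (F Pfix - Pfix)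
      ≤ Λ * specNorm (Q k - Pfix) + specNorm (Q (k + 1) - Pfix) := by
    intro k
    have hiden : F Pfix - Pfix = (F Pfix - F (Q k)) + (Q (k + 1) - Pfix) := by
      rw [hQsucc k]
      abel
    have h1 : specNorm (F Pfix - F (Q k)) ≤ Λ * specNorm (Pfix - Q k) :=
      PhiHat_lip σ A Abar B Bbar hn hm hR0 hτ hmem (hQmem k)
    have h2 : specNorm (Pfix - Q k) = specNorm (Q k - Pfix) := by
      have : Pfix - Q k = -(Q k - Pfix) := by abel
      rw [this, specNorm_neg hn]
    rw [hiden]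
    calc specNorm ((F Pfix - F (Q k)) + (Q (k + 1) - Pfix))
        ≤ specNorm (F Pfix - F (Q k)) + specNorm (Q (k + 1) - Pfix) := specNorm_add_le hn _ _
      _ ≤ Λ * specNorm (Q k - Pfix) + specNorm (Q (k + 1) - Pfix) := by
          rw [← h2]; linarith
  have htends : Filter.Tendsto (fun k => Λ * specNorm (Q k - Pfix)
      + specNorm (Q (k + 1) - Pfix)) Filter.atTop (nhds 0) := by
    have h1 : Filter.Tendsto (fun k => Λ * specNorm (Q k - Pfix)) Filter.atTop (nhds 0) := by
      simpa using hconv.const_mul Λ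
    have h2 : Filter.Tendsto (fun k => specNorm (Q (k + 1) - Pfix)) Filter.atTop (nhds 0) :=
      hconv.comp (Filter.tendsto_add_atTop_nat 1)
    simpa using h1.add h2
  have hle0 : specNorm (F Pfix - Pfix) ≤ 0 :=
    ge_of_tendsto' htends hbound |>.trans_eq rfl
  have h0 : specNorm (F Pfix - Pfix) = 0 := le_antisymm hle0 (specNorm_nonneg _)
  have := eq_zero_of_specNorm_eq_zero hn h0
  have : F Pfix = Pfix := by
    have h := sub_eq_zero.mp this
    exact h
  exact this

end Fixed
end Main

/-- The regularized normalized operator is `Λ(τ)`-Lipschitz on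
the slice `S_{δ_τ}`; if `Λ(τ) < 1` it has a unique fixed point there, and the
RNVI iterates converge globally and linearly to it. -/
theorem rnvi_contraction {n m : ℕ} (hn : 0 < n) (hm : 0 < m)
    (σ : ℝ) (hσ : 0 < σ)
    (A Abar : Matrix (Fin n) (Fin n) ℝ) (B Bbar : Matrix (Fin n) (Fin m) ℝ)
    (hR0 : (Bᵀ * B + σ ^ 2 • (Bbarᵀ * Bbar)).PosDef)
    (τ : ℝ) (hτ : τ ∈ Set.Ioo (0 : ℝ) 1) :
    (∀ P Q : Matrix (Fin n) (Fin n) ℝ,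
      P ∈ Slice (deltaTau σ A Abar τ) → Q ∈ Slice (deltaTau σ A Abar τ) →
      specNorm (PhiHat σ A Abar B Bbar τ P - PhiHat σ A Abar B Bbar τ Q)
        ≤ LambdaTau σ A Abar B Bbar τ * specNorm (P - Q)) ∧
    (LambdaTau σ A Abar B Bbar τ < 1 →
      ∃ Pfix : Matrix (Fin n) (Fin n) ℝ,
        Pfix ∈ Slice (deltaTau σ A Abar τ) ∧ PhiHat σ A Abar B Bbar τ Pfix = Pfix ∧
        (∀ Q : Matrix (Fin n) (Fin n) ℝ, Q ∈ Slice (deltaTau σ A Abar τ) →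
          PhiHat σ A Abar B Bbar τ Q = Q → Q = Pfix) ∧
        (∀ Pseq : ℕ → Matrix (Fin n) (Fin n) ℝ,
          Pseq 0 ∈ Slice (deltaTau σ A Abar τ) →
          (∀ k : ℕ, Pseq (k + 1) = PhiHat σ A Abar B Bbar τ (Pseq k)) →
          ∀ k : ℕ, specNorm (Pseq k - Pfix)
            ≤ LambdaTau σ A Abar B Bbar τ ^ k * specNorm (Pseq 0 - Pfix))) := by
  have hδ : 0 < deltaTau σ A Abar τ := deltaTau_pos hn σ A Abar hτ
  have hΛ0 : 0 ≤ LambdaTau σ A Abar B Bbar τ := LambdaTau_nonneg σ A Abar B Bbar hn hm hR0 hτ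
  constructor
  · intro P Q hP hQ
    exact PhiHat_lip σ A Abar B Bbar hn hm hR0 hτ hP hQ
  · intro hΛ
    obtain ⟨Pfix, hmem, hfix⟩ := exists_fixed_point σ A Abar B Bbar hn hm hR0 hτ hΛ
    refine ⟨Pfix, hmem, hfix, ?_, ?_⟩
    · intro Q hQ hQfix
      have h1 := PhiHat_lip σ A Abar B Bbar hn hm hR0 hτ hQ hmem
      rw [hQfix, hfix] at h1
      have h2 : 0 ≤ specNorm (Q - Pfix) := specNorm_nonneg _
      have h0 : specNorm (Q - Pfix) = 0 := by nlinarith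
      exact sub_eq_zero.mp (eq_zero_of_specNorm_eq_zero hn h0)
    · intro Pseq h0 hrec
      have hmemk : ∀ k, Pseq k ∈ Slice (deltaTau σ A Abar τ) := by
        intro k
        induction k with
        | zero => exact h0
        | succ k ih =>
            rw [hrec k]
            exact PhiHat_mem σ A Abar B Bbar hn hm hR0 hτ ih
      intro k
      induction k with
      | zero => simp
      | succ k ih =>
          have hlip := PhiHat_lip σ A Abar B Bbar hn hm hR0 hτ (hmemk k) hmem
          rw [hfix] at hlip
          rw [hrec k]
          calc specNorm (PhiHat σ A Abar B Bbar τ (Pseq k) - Pfix)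
              ≤ LambdaTau σ A Abar B Bbar τ * specNorm (Pseq k - Pfix) := hlip
            _ ≤ LambdaTau σ A Abar B Bbar τ
                  * (LambdaTau σ A Abar B Bbar τ ^ k * specNorm (Pseq 0 - Pfix)) :=
                mul_le_mul_of_nonneg_left ih hΛ0
            _ = LambdaTau σ A Abar B Bbar τ ^ (k + 1) * specNorm (Pseq 0 - Pfix) := by ring


end SCS
end
end
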